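/- arXiv:1511.08009 — 6 statements merged into one kernel-verified Lean document; each statement's English description precedes it below -/
import Mathlib

section
/- Let C be a planar convex body that is k-rotationally symmetric about a point p in its interior, for an integer k ≥ 3. Then the maximum relative diameter of the standard k-partition of C satisfies d_M(P_k) = diam(C ∩ S_k) = max{R, 2 r sin(π/k)}. -/
open Metric Set

/-- Rotation of angle `α` about the point `p` in the plane `ℂ`. -/
noncomputable def rot (p : ℂ) (α : ℝ) : ℂ → ℂ :=
  fun z => p + Complex.exp (α * Complex.I) * (z - p)

/-- A planar convex body: a compact convex subset of the plane with nonempty interior. -/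
def IsConvexBody (C : Set ℂ) : Prop :=
  IsCompact C ∧ Convex ℝ C ∧ (interior C).Nonempty

/-- `C` is `k`-rotationally symmetric about `p`: the rotation of angle `2π/k`
about `p` maps `C` onto itself. -/
def IsRotSym (C : Set ℂ) (p : ℂ) (k : ℕ) : Prop :=
  rot p (2 * Real.pi / k) '' C = C

/-- The closed convex sector at `p` spanned by `x - p` and `ρ_k(x) - p`. -/
noncomputable def sector (p x : ℂ) (k : ℕ) : Set ℂ :=
  {z | ∃ a b : ℝ, 0 ≤ a ∧ 0 ≤ b ∧
    z = p + (a : ℂ) * (x - p) + (b : ℂ) * (rot p (2 * Real.pi / k) x - p)}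

/-- The maximum relative diameter of the standard `k`-partition of `C`
(with center `p` and endpoint `x`): the diameter of one piece `C ∩ S_k`. -/
noncomputable def dM (C : Set ℂ) (p x : ℂ) (k : ℕ) : ℝ :=
  Metric.diam (C ∩ sector p x k)

/-- The circumradius of `C` with respect to `p`: `sup_{y ∈ C} dist p y`. -/
noncomputable def circumrad (C : Set ℂ) (p : ℂ) : ℝ :=
  ⨆ y ∈ C, dist p y

/-! ### Algebraic lemmas -/

lemma Qform_nonneg (c x1 x2 : ℝ) (h1 : -1 ≤ c) (h2 : c ≤ 1) :
    0 ≤ x1^2 + x2^2 + 2*c*x1*x2 := by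
  nlinarith [sq_nonneg (x1+x2), sq_nonneg (x1-x2)]

set_option maxHeartbeats 1000000 in
/-- Step 1: scaling out both points does not decrease the distance, under case-2. -/
lemma step1 (c a1 a2 b1 b2 τ σ : ℝ) (h1 : -1 ≤ c) (h2 : c ≤ 1)
    (hτ : 1 ≤ τ) (hσ : 1 ≤ σ)
    (hca : 2*(a1*b1+a2*b2+c*(a1*b2+a2*b1)) ≤ a1^2+a2^2+2*c*a1*a2)
    (hcb : 2*(a1*b1+a2*b2+c*(a1*b2+a2*b1)) ≤ b1^2+b2^2+2*c*b1*b2) :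
    (a1-b1)^2+(a2-b2)^2+2*c*(a1-b1)*(a2-b2)
      ≤ (τ*a1-σ*b1)^2+(τ*a2-σ*b2)^2+2*c*(τ*a1-σ*b1)*(τ*a2-σ*b2) := by
  have hx := Qform_nonneg c ((τ-1)*a1-(σ-1)*b1) ((τ-1)*a2-(σ-1)*b2) h1 h2
  have hQa := Qform_nonneg c a1 a2 h1 h2
  have hQb := Qform_nonneg c b1 b2 h1 h2
  rcases le_or_gt 0 (a1*b1+a2*b2+c*(a1*b2+a2*b1)) with hq | hq
  · nlinarith [mul_nonneg (sub_nonneg.2 hτ) (by nlinarith : (0:ℝ) ≤ a1^2+a2^2+2*c*a1*a2 - (a1*b1+a2*b2+c*(a1*b2+a2*b1))),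
      mul_nonneg (sub_nonneg.2 hσ) (by nlinarith : (0:ℝ) ≤ b1^2+b2^2+2*c*b1*b2 - (a1*b1+a2*b2+c*(a1*b2+a2*b1)))]
  · nlinarith [mul_nonneg (sub_nonneg.2 hτ) (by nlinarith : (0:ℝ) ≤ a1^2+a2^2+2*c*a1*a2 - (a1*b1+a2*b2+c*(a1*b2+a2*b1))),
      mul_nonneg (sub_nonneg.2 hσ) (by nlinarith : (0:ℝ) ≤ b1^2+b2^2+2*c*b1*b2 - (a1*b1+a2*b2+c*(a1*b2+a2*b1)))]

set_option maxHeartbeats 1000000 in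
/-- tight case, opposite constraints tight -/
lemma tight_opp (c a1 a2 b1 b2 : ℝ) (hc : -(1/2) ≤ c) (hc1 : c ≤ 1)
    (ha1 : 0 ≤ a1) (ha2 : 0 ≤ a2) (hb1 : 0 ≤ b1) (hb2 : 0 ≤ b2)
    (E1 : a1 + c*a2 = 1) (E2 : c*b1 + b2 = 1)
    (hA2 : c*a1 + a2 ≤ 1) (hB1 : b1 + c*b2 ≤ 1) :
    (a1-b1)^2+(a2-b2)^2+2*c*(a1-b1)*(a2-b2) ≤ 2*(1-c) := by
  rcases eq_or_lt_of_le hc1 with rfl | hlt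
  · nlinarith [sq_nonneg ((a1-b1)+(a2-b2))]
  · set X := a1 - a2 with hX
    set Y := b2 - b1 with hY
    have hX1 : X ≤ 1 := by nlinarith
    have hY1 : Y ≤ 1 := by nlinarith
    have hX0 : 0 ≤ X := by nlinarith
    have hY0 : 0 ≤ Y := by nlinarith
    have hP : (1+c)*((a1-b1)+(a2-b2)) = (1-c)*(Y-X) := by
      rw [hX, hY]; linear_combination 2*E1 - 2*E2
    have hcore : (1-c)*((1-c)*(X-Y)^2+(1+c)*(X+Y)^2) ≤ 4*(1+c)*(1-c) := by
      nlinarith [mul_nonneg (mul_nonneg (by linarith : (0:ℝ) ≤ 1-c) (by linarith : (0:ℝ) ≤ 1-X)) (by linarith : (0:ℝ) ≤ 1-Y),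
        mul_nonneg (mul_nonneg (by linarith : (0:ℝ) ≤ 1-c) hX0) (by linarith : (0:ℝ) ≤ 1-X),
        mul_nonneg (mul_nonneg (by linarith : (0:ℝ) ≤ 1-c) hY0) (by linarith : (0:ℝ) ≤ 1-Y),
        mul_nonneg (mul_nonneg (by linarith : (0:ℝ) ≤ 1-c) (by linarith : (0:ℝ) ≤ 1+2*c)) (by nlinarith : (0:ℝ) ≤ 1 - X*Y)]
    have h2 : ((1+c)*((a1-b1)+(a2-b2)))^2 = ((1-c)*(Y-X))^2 := by rw [hP]
    have hid : 2*(1+c)*((a1-b1)^2+(a2-b2)^2+2*c*(a1-b1)*(a2-b2))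
        = (1-c)*((1-c)*(Y-X)^2) + (1+c)*((1-c)*(X+Y)^2) := by
      rw [hX, hY]; rw [hX, hY] at h2; linear_combination h2
    nlinarith [hid, hcore, (show (0:ℝ) < 1+c by linarith)]

set_option maxHeartbeats 1000000 in
/-- tight case, same constraint tight -/
lemma tight_same (c a1 a2 b1 b2 : ℝ) (hc : -(1/2) ≤ c) (hc1 : c ≤ 1)
    (ha1 : 0 ≤ a1) (ha2 : 0 ≤ a2) (hb1 : 0 ≤ b1) (hb2 : 0 ≤ b2)
    (E1 : a1 + c*a2 = 1) (E2 : b1 + c*b2 = 1)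
    (hA2 : c*a1 + a2 ≤ 1) (hB2 : c*b1 + b2 ≤ 1) :
    (a1-b1)^2+(a2-b2)^2+2*c*(a1-b1)*(a2-b2) ≤ 2*(1-c) := by
  rcases eq_or_lt_of_le hc1 with rfl | hlt
  · nlinarith [sq_nonneg ((a1-b1)+(a2-b2))]
  · set X := a1 - a2 with hX
    set Y := b1 - b2 with hY
    have hX1 : X ≤ 1 := by nlinarith
    have hY1 : Y ≤ 1 := by nlinarith
    have hX0 : 0 ≤ X := by nlinarith
    have hY0 : 0 ≤ Y := by nlinarith
    have hP : (1+c)*((a1-b1)+(a2-b2)) = (1-c)*(Y-X) := by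
      rw [hX, hY]; linear_combination 2*E1 - 2*E2
    have h2 : ((1+c)*((a1-b1)+(a2-b2)))^2 = ((1-c)*(Y-X))^2 := by rw [hP]
    have hid : 2*(1+c)*((a1-b1)^2+(a2-b2)^2+2*c*(a1-b1)*(a2-b2))
        = (1-c)*((1-c)*(Y-X)^2) + (1+c)*((1-c)*(X-Y)^2) := by
      rw [hX, hY]; rw [hX, hY] at h2; linear_combination h2
    have hcore : (1-c)*((1-c)*(Y-X)^2+(1+c)*(X-Y)^2) ≤ 4*(1+c)*(1-c) := by
      nlinarith [mul_nonneg (mul_nonneg (by linarith : (0:ℝ) ≤ 1-c) (by linarith : (0:ℝ) ≤ 1-X+Y)) (by linarith : (0:ℝ) ≤ 1+X-Y),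
        mul_nonneg (by linarith : (0:ℝ) ≤ 1-c) (by linarith : (0:ℝ) ≤ 1+2*c)]
    nlinarith [hid, hcore, (show (0:ℝ) < 1+c by linarith)]

set_option maxHeartbeats 1000000 in
/-- combined tight lemma: both points have one of the two constraints tight -/
lemma tight_comb (c a1 a2 b1 b2 : ℝ) (hc : -(1/2) ≤ c) (hc1 : c ≤ 1)
    (ha1 : 0 ≤ a1) (ha2 : 0 ≤ a2) (hb1 : 0 ≤ b1) (hb2 : 0 ≤ b2)
    (hA1 : a1 + c*a2 ≤ 1) (hA2 : c*a1 + a2 ≤ 1)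
    (hB1 : b1 + c*b2 ≤ 1) (hB2 : c*b1 + b2 ≤ 1)
    (hEa : a1 + c*a2 = 1 ∨ c*a1 + a2 = 1) (hEb : b1 + c*b2 = 1 ∨ c*b1 + b2 = 1) :
    (a1-b1)^2+(a2-b2)^2+2*c*(a1-b1)*(a2-b2) ≤ 2*(1-c) := by
  rcases hEa with Ea | Ea <;> rcases hEb with Eb | Eb
  · exact tight_same c a1 a2 b1 b2 hc hc1 ha1 ha2 hb1 hb2 Ea Eb hA2 hB2
  · exact tight_opp c a1 a2 b1 b2 hc hc1 ha1 ha2 hb1 hb2 Ea Eb hA2 hB1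
  · have h := tight_opp c b1 b2 a1 a2 hc hc1 hb1 hb2 ha1 ha2 Eb Ea hB2 hA1
    nlinarith [h]
  · have h := tight_same c a2 a1 b2 b1 hc hc1 ha2 ha1 hb2 hb1 (by linarith) (by linarith) (by linarith) (by linarith)
    nlinarith [h]

set_option maxHeartbeats 1000000 in
/-- master algebraic lemma -/
lemma key_alg (c ρ a1 a2 b1 b2 : ℝ) (hc : -(1/2) ≤ c) (hc1 : c ≤ 1)
    (ha1 : 0 ≤ a1) (ha2 : 0 ≤ a2) (hb1 : 0 ≤ b1) (hb2 : 0 ≤ b2)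
    (hA1 : a1 + c*a2 ≤ 1) (hA2 : c*a1 + a2 ≤ 1)
    (hB1 : b1 + c*b2 ≤ 1) (hB2 : c*b1 + b2 ≤ 1)
    (hQa : a1^2+a2^2+2*c*a1*a2 ≤ ρ^2) (hQb : b1^2+b2^2+2*c*b1*b2 ≤ ρ^2) :
    (a1-b1)^2+(a2-b2)^2+2*c*(a1-b1)*(a2-b2) ≤ max (ρ^2) (2*(1-c)) := by
  have hcm1 : (-1:ℝ) ≤ c := by linarith
  set q := a1*b1+a2*b2+c*(a1*b2+a2*b1) with hq
  rcases le_or_gt (a1^2+a2^2+2*c*a1*a2) (2*q) with h1 | h1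
  · refine le_trans ?_ (le_max_left _ _)
    nlinarith [hQb]
  rcases le_or_gt (b1^2+b2^2+2*c*b1*b2) (2*q) with h2 | h2
  · refine le_trans ?_ (le_max_left _ _)
    nlinarith [hQa]
  refine le_trans ?_ (le_max_right _ _)
  have hQa0 := Qform_nonneg c a1 a2 hcm1 hc1
  have hQb0 := Qform_nonneg c b1 b2 hcm1 hc1
  have hsa : 0 < a1 + a2 := by
    rcases lt_or_ge 0 (a1 + a2) with h | h
    · exact h
    · exfalso
      have e1 : a1 = 0 := by linarith
      have e2 : a2 = 0 := by linarith
      rw [e1, e2] at h1; simp at h1; nlinarith [h1]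
  have hsb : 0 < b1 + b2 := by
    rcases lt_or_ge 0 (b1 + b2) with h | h
    · exact h
    · exfalso
      have e1 : b1 = 0 := by linarith
      have e2 : b2 = 0 := by linarith
      rw [e1, e2] at h2; simp at h2; nlinarith [h2]
  set Pa := max (a1 + c*a2) (c*a1 + a2) with hPa
  set Pb := max (b1 + c*b2) (c*b1 + b2) with hPb
  have hPa1 : 0 < Pa := by
    have := le_max_left (a1 + c*a2) (c*a1 + a2)
    have := le_max_right (a1 + c*a2) (c*a1 + a2)
    nlinarith
  have hPb1 : 0 < Pb := by
    have := le_max_left (b1 + c*b2) (c*b1 + b2)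
    have := le_max_right (b1 + c*b2) (c*b1 + b2)
    nlinarith
  have hPale : Pa ≤ 1 := max_le hA1 hA2
  have hPble : Pb ≤ 1 := max_le hB1 hB2
  set τ := 1/Pa with hτ
  set σ := 1/Pb with hσ
  have hτ1 : 1 ≤ τ := by rw [hτ]; exact one_le_one_div hPa1 hPale
  have hσ1 : 1 ≤ σ := by rw [hσ]; exact one_le_one_div hPb1 hPble
  have hτ0 : 0 < τ := by positivity
  have hσ0 : 0 < σ := by positivity
  have hstep1 := step1 c a1 a2 b1 b2 τ σ hcm1 hc1 hτ1 hσ1 (le_of_lt h1) (le_of_lt h2)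
  have hτPa : τ * Pa = 1 := by rw [hτ]; field_simp
  have hσPb : σ * Pb = 1 := by rw [hσ]; field_simp
  have hEa : τ*a1 + c*(τ*a2) = 1 ∨ c*(τ*a1) + τ*a2 = 1 := by
    rcases max_choice (a1 + c*a2) (c*a1 + a2) with h | h
    · left; rw [← hτPa, hPa, h]; ring
    · right; rw [← hτPa, hPa, h]; ring
  have hEb : σ*b1 + c*(σ*b2) = 1 ∨ c*(σ*b1) + σ*b2 = 1 := by
    rcases max_choice (b1 + c*b2) (c*b1 + b2) with h | h
    · left; rw [← hσPb, hPb, h]; ring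
    · right; rw [← hσPb, hPb, h]; ring
  have hA1' : τ*a1 + c*(τ*a2) ≤ 1 := by
    have h : a1 + c*a2 ≤ Pa := le_max_left _ _
    calc τ*a1 + c*(τ*a2) = τ*(a1 + c*a2) := by ring
    _ ≤ τ * Pa := by apply mul_le_mul_of_nonneg_left h (le_of_lt hτ0)
    _ = 1 := hτPa
  have hA2' : c*(τ*a1) + τ*a2 ≤ 1 := by
    have h : c*a1 + a2 ≤ Pa := le_max_right _ _
    calc c*(τ*a1) + τ*a2 = τ*(c*a1 + a2) := by ring
    _ ≤ τ * Pa := by apply mul_le_mul_of_nonneg_left h (le_of_lt hτ0)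
    _ = 1 := hτPa
  have hB1' : σ*b1 + c*(σ*b2) ≤ 1 := by
    have h : b1 + c*b2 ≤ Pb := le_max_left _ _
    calc σ*b1 + c*(σ*b2) = σ*(b1 + c*b2) := by ring
    _ ≤ σ * Pb := by apply mul_le_mul_of_nonneg_left h (le_of_lt hσ0)
    _ = 1 := hσPb
  have hB2' : c*(σ*b1) + σ*b2 ≤ 1 := by
    have h : c*b1 + b2 ≤ Pb := le_max_right _ _
    calc c*(σ*b1) + σ*b2 = σ*(c*b1 + b2) := by ring
    _ ≤ σ * Pb := by apply mul_le_mul_of_nonneg_left h (le_of_lt hσ0)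
    _ = 1 := hσPb
  have htight := tight_comb c (τ*a1) (τ*a2) (σ*b1) (σ*b2) hc hc1
    (by positivity) (by positivity) (by positivity) (by positivity)
    hA1' hA2' hB1' hB2' hEa hEb
  linarith [hstep1, htight]

/-! ### Rotation lemmas -/

lemma rot_sub (p : ℂ) (α : ℝ) (z : ℂ) : rot p α z - p = Complex.exp (α * Complex.I) * (z - p) := by
  simp [rot]

lemma rot_rot (p : ℂ) (α β : ℝ) (z : ℂ) : rot p α (rot p β z) = rot p (α + β) z := by
  simp only [rot]
  rw [add_sub_cancel_left, ← mul_assoc, ← Complex.exp_add]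
  push_cast
  ring_nf

lemma rot_zero (p : ℂ) (z : ℂ) : rot p 0 z = z := by
  simp [rot]

lemma rot_inv (p : ℂ) (α : ℝ) (z : ℂ) : rot p (-α) (rot p α z) = z := by
  rw [rot_rot, neg_add_cancel, rot_zero]

lemma rot_injective (p : ℂ) (α : ℝ) : Function.Injective (rot p α) := by
  intro a b h
  have := congrArg (rot p (-α)) h
  rwa [rot_inv, rot_inv] at this

/-- rot as a homeomorphism -/
noncomputable def rotHomeo (p : ℂ) (α : ℝ) : ℂ ≃ₜ ℂ where
  toFun := rot p α
  invFun := rot p (-α)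
  left_inv := fun z => rot_inv p α z
  right_inv := fun z => by rw [rot_rot, add_neg_cancel, rot_zero]
  continuous_toFun := by
    unfold rot; fun_prop
  continuous_invFun := by
    unfold rot; fun_prop

lemma rot_image_interior (p : ℂ) (α : ℝ) (C : Set ℂ) :
    rot p α '' interior C = interior (rot p α '' C) :=
  (rotHomeo p α).image_interior C

lemma rot_image_iter {C : Set ℂ} {p : ℂ} {θ : ℝ} (h : rot p θ '' C = C) (j : ℕ) :
    rot p (j*θ) '' C = C := by
  induction j with
  | zero =>
    have h0 : rot p ((0:ℕ)*θ) = id := funext fun z => by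
      simpa using rot_zero p z
    rw [h0, Set.image_id]
  | succ n ih =>
    have hcast : ((n+1 : ℕ):ℝ)*θ = θ + (n:ℝ)*θ := by push_cast; ring
    have hcomp : rot p (((n+1 : ℕ):ℝ)*θ) = rot p θ ∘ rot p ((n:ℝ)*θ) := by
      funext z; rw [Function.comp_apply, rot_rot, ← hcast]
    rw [hcomp, Set.image_comp, ih, h]

/-! ### Geometric lemmas -/

set_option maxHeartbeats 1000000 in
/-- the open ball of radius infDist to the frontier is inside C -/
lemma ball_subset_of_interior {C : Set ℂ} (hconv : Convex ℝ C)
    {p : ℂ} (hp : p ∈ interior C) :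
    ball p (infDist p (frontier C)) ⊆ C := by
  set r := infDist p (frontier C) with hr
  have hdisj : ∀ y ∈ ball p r, y ∉ frontier C := by
    intro y hy hyf
    have h1 : r ≤ dist p y := infDist_le_dist_of_mem hyf
    rw [mem_ball, dist_comm] at hy
    linarith
  have hsub : ball p r ⊆ interior C ∪ (closure C)ᶜ := by
    intro y hy
    rcases em (y ∈ interior C) with h | h
    · exact Or.inl h
    rcases em (y ∈ closure C) with h2 | h2
    · exact absurd ⟨h2, h⟩ (hdisj y hy)
    · exact Or.inr h2
  have hconn : IsPreconnected (ball p r) := (convex_ball p r).isPreconnected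
  have hsub2 : ball p r ⊆ interior C := by
    rcases le_or_gt r 0 with h | h
    · rw [ball_eq_empty.2 h]; exact empty_subset _
    · apply hconn.subset_left_of_subset_union isOpen_interior
        (isClosed_closure.isOpen_compl) ?_ hsub ⟨p, mem_ball_self h, hp⟩
      rw [Set.disjoint_iff]
      rintro y ⟨h1, h2⟩
      exact h2 (subset_closure (interior_subset h1))
  exact hsub2.trans interior_subset

lemma closedBall_subset_of_interior {C : Set ℂ} (hcl : IsClosed C) (hconv : Convex ℝ C)
    {p : ℂ} (hp : p ∈ interior C) (hpos : 0 < infDist p (frontier C)) :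
    closedBall p (infDist p (frontier C)) ⊆ C := by
  have h1 := ball_subset_of_interior hconv hp
  have h2 : closure (ball p (infDist p (frontier C))) ⊆ closure C :=
    closure_mono h1
  rwa [closure_ball p (ne_of_gt hpos), hcl.closure_eq] at h2

set_option maxHeartbeats 1000000 in
/-- the supporting half-plane at a closest frontier point -/
lemma halfplane {C : Set ℂ} (hconv : Convex ℝ C) {p x' : ℂ} {r : ℝ} (hr0 : 0 < r)
    (hcb : closedBall p r ⊆ C) (hx' : x' ∉ interior C) (hd : ‖(x' - p)‖ = r)
    {y : ℂ} (hy : y ∈ C) : ((y - p) * (starRingEnd ℂ) (x' - p)).re ≤ r^2 := by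
  by_contra hcon
  push_neg at hcon
  set u := x' - p with hu
  set v := y - p with hv
  set d := (v * (starRingEnd ℂ) u).re - r^2 with hdd
  have hd0 : 0 < d := by simp only [hdd]; linarith [hcon]
  set V := ‖v‖ with hV
  have hV0 : 0 ≤ V := norm_nonneg v
  have hrev : (v * (starRingEnd ℂ) u).re ≤ V * r := by
    calc (v * (starRingEnd ℂ) u).re ≤ ‖(v * (starRingEnd ℂ) u)‖ := Complex.re_le_norm _
    _ = V * r := by rw [norm_mul, Complex.norm_conj, hd]
  set t := d / (V^2 + 1) with ht
  have htden : (0:ℝ) < V^2 + 1 := by positivity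
  have ht0 : 0 < t := div_pos hd0 htden
  have htd : t * (V^2 + 1) = d := by rw [ht]; field_simp
  have ht1 : t < 1 := by
    rw [ht, div_lt_one htden]; nlinarith [sq_nonneg (V - r)]
  set D := 2 + 2*r + 2*t*V with hD
  have hD0 : 0 < D := by positivity
  set ε := min 1 (t*d/D) with hε
  have hε0 : 0 < ε := lt_min one_pos (by positivity)
  have hε1 : ε ≤ 1 := min_le_left _ _
  have hεD : ε * D ≤ t * d := by
    calc ε * D ≤ (t*d/D) * D := by
          apply mul_le_mul_of_nonneg_right (min_le_right _ _) (le_of_lt hD0)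
    _ = t * d := by field_simp
  apply hx'
  have hball : ball x' ε ⊆ C := by
    intro z hz
    rw [mem_ball, Complex.dist_eq] at hz
    set w := z - x' with hw
    set ζ := u + w - (t:ℂ)*v with hζ
    have hwε : ‖w‖ < ε := hz
    have hw0 : 0 ≤ ‖w‖ := norm_nonneg w
    have A1 : (u * (starRingEnd ℂ) w).re ≤ r * ε := by
      calc (u * (starRingEnd ℂ) w).re ≤ ‖(u * (starRingEnd ℂ) w)‖ := Complex.re_le_norm _
      _ = r * ‖w‖ := by rw [norm_mul, Complex.norm_conj, hd]
      _ ≤ r * ε := by nlinarith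
    have A2 : -(w * (starRingEnd ℂ) v).re ≤ ε * V := by
      have h3 := Complex.abs_re_le_norm (w * (starRingEnd ℂ) v)
      have h4 : ‖(w * (starRingEnd ℂ) v)‖ = ‖w‖ * V := by
        rw [norm_mul, Complex.norm_conj]
      have h5 : ‖w‖ * V ≤ ε * V := by nlinarith
      have := neg_abs_le ((w * (starRingEnd ℂ) v).re)
      nlinarith [abs_nonneg ((w * (starRingEnd ℂ) v).re)]
    have A4 : Complex.normSq u = r^2 := by rw [← Complex.sq_norm, hd]
    have A5 : Complex.normSq w ≤ ε^2 := by rw [← Complex.sq_norm]; nlinarith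
    have A6 : Complex.normSq v = V^2 := by rw [← Complex.sq_norm, hV]
    have hid : Complex.normSq ζ
        = Complex.normSq u + Complex.normSq w + t^2 * Complex.normSq v
          + 2*((u * (starRingEnd ℂ) w).re) - 2*t*((v * (starRingEnd ℂ) u).re)
          - 2*t*((w * (starRingEnd ℂ) v).re) := by
      simp only [hζ, Complex.normSq_apply, Complex.mul_re, Complex.sub_re, Complex.sub_im,
        Complex.add_re, Complex.add_im, Complex.conj_re, Complex.conj_im,
        Complex.ofReal_re, Complex.ofReal_im, Complex.mul_im]
      ring
    have hre : (v * (starRingEnd ℂ) u).re = r^2 + d := by rw [hdd]; ring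
    have hkey : Complex.normSq ζ ≤ ((1-t)*r)^2 := by
      rw [hid, hre, A4, A6]
      have ht2 : t^2*V^2 ≤ t*d := by nlinarith [sq_nonneg t]
      nlinarith [hεD, mul_pos ht0 hd0]
    have habs : ‖ζ‖ ≤ (1-t)*r := by
      have h1 := Complex.sq_norm ζ
      have h2 := norm_nonneg ζ
      nlinarith [hkey, mul_pos (show (0:ℝ) < 1 - t by linarith) hr0]
    set q := p + ζ / ((1-t : ℝ) : ℂ) with hq
    have hqmem : q ∈ C := by
      apply hcb
      rw [mem_closedBall, Complex.dist_eq]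
      have h6 : q - p = ζ / ((1-t : ℝ) : ℂ) := by rw [hq]; ring
      rw [h6, norm_div, Complex.norm_real, Real.norm_eq_abs, abs_of_pos (by linarith : (0:ℝ) < 1 - t)]
      rw [div_le_iff₀ (by linarith : (0:ℝ) < 1 - t)]
      nlinarith [habs]
    have hcomb := hconv hqmem hy (by linarith : (0:ℝ) ≤ 1 - t) (le_of_lt ht0) (by ring)
    have hne : ((1-t : ℝ) : ℂ) ≠ 0 := by
      simp only [ne_eq, Complex.ofReal_eq_zero]; linarith
    have hne' : (1 : ℂ) - (t:ℂ) ≠ 0 := by push_cast at hne; exact hne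
    have heq : (1-t) • q + t • y = z := by
      clear_value q ζ w v u ε D t V d
      rw [Complex.real_smul, Complex.real_smul, hq, hζ, hu, hv, hw]
      field_simp [hne']
      push_cast
      ring
    rwa [heq] at hcomb
  exact mem_interior.2 ⟨ball x' ε, hball, isOpen_ball, mem_ball_self hε0⟩

lemma circumrad_spec {C : Set ℂ} (hcomp : IsCompact C) (hne : C.Nonempty) (p : ℂ) :
    ∃ y₀ ∈ C, circumrad C p = dist p y₀ ∧ ∀ y ∈ C, dist p y ≤ dist p y₀ := by
  obtain ⟨y₀, hy₀, hmax⟩ := hcomp.exists_isMaxOn hne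
    ((continuous_const.dist continuous_id).continuousOn)
  refine ⟨y₀, hy₀, ?_, fun y hy => hmax hy⟩
  apply le_antisymm
  · exact Real.iSup_le (fun y => Real.iSup_le (fun hyC => hmax hyC) dist_nonneg) dist_nonneg
  · have hb : BddAbove (range fun y => ⨆ _ : y ∈ C, dist p y) := by
      refine ⟨max (dist p y₀) 0, ?_⟩
      rintro s ⟨y, rfl⟩
      exact Real.iSup_le (fun hyC => le_max_of_le_left (hmax hyC)) (le_max_right _ _)
    have h5 : dist p y₀ ≤ ⨆ _ : y₀ ∈ C, dist p y₀ := by rw [ciSup_pos hy₀]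
    exact le_ciSup_of_le hb y₀ h5

set_option maxHeartbeats 1000000 in
/-- every point of C has a rotated copy in the sector, at the same distance from p -/
lemma exists_sector_point {C : Set ℂ} {p x : ℂ} {k : ℕ} (hk : 3 ≤ k)
    (hsym : rot p (2*Real.pi/k) '' C = C) (hxp : x ≠ p) {y : ℂ} (hy : y ∈ C) :
    ∃ y' ∈ C ∩ sector p x k, dist p y' = dist p y := by
  have hπ := Real.pi_pos
  have hk0 : (0:ℝ) < k := by positivity
  set θ := 2*Real.pi/k with hθ
  have hθ0 : 0 < θ := by positivity
  have hθle : θ ≤ 2*Real.pi/3 := by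
    rw [hθ]; apply div_le_div_of_nonneg_left (by positivity) (by norm_num)
    exact_mod_cast hk
  have hθπ : θ < Real.pi := by nlinarith
  have hsinθ : 0 < Real.sin θ := Real.sin_pos_of_pos_of_lt_pi hθ0 hθπ
  set w := (y - p)/(x - p) with hw
  set ψ0 := Complex.arg w with hψ0
  set ψ := if 0 ≤ ψ0 then ψ0 else ψ0 + 2*Real.pi with hψ
  have hψnn : 0 ≤ ψ := by
    rw [hψ]; split_ifs with h
    · exact h
    · push_neg at h; nlinarith [Complex.neg_pi_lt_arg w]
  have hexp : Complex.exp (ψ*Complex.I) = Complex.exp (ψ0*Complex.I) := by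
    rw [hψ]; split_ifs with h
    · rfl
    · push_cast
      rw [add_mul, Complex.exp_add, Complex.exp_two_pi_mul_I, mul_one]
  set j := ⌊ψ/θ⌋₊ with hj
  set χ := ψ - j*θ with hχ
  have hχ0 : 0 ≤ χ := by
    rw [hχ]
    have h1 : (j:ℝ) ≤ ψ/θ := Nat.floor_le (by positivity)
    have h2 := (mul_le_mul_of_nonneg_right h1 (le_of_lt hθ0))
    rw [div_mul_cancel₀ _ (ne_of_gt hθ0)] at h2
    linarith
  have hχθ : χ < θ := by
    rw [hχ]
    have h1 : ψ/θ < j + 1 := Nat.lt_floor_add_one _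
    have h2 := (mul_lt_mul_of_pos_right h1 hθ0)
    rw [div_mul_cancel₀ _ (ne_of_gt hθ0)] at h2
    nlinarith
  set a := ‖w‖ * Real.sin (θ-χ) / Real.sin θ with ha
  set b := ‖w‖ * Real.sin χ / Real.sin θ with hb
  have ha0 : 0 ≤ a := by
    apply div_nonneg _ (le_of_lt hsinθ)
    apply mul_nonneg (norm_nonneg w)
    apply Real.sin_nonneg_of_nonneg_of_le_pi (by linarith) (by linarith)
  have hb0 : 0 ≤ b := by
    apply div_nonneg _ (le_of_lt hsinθ)
    apply mul_nonneg (norm_nonneg w)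
    apply Real.sin_nonneg_of_nonneg_of_le_pi hχ0 (by linarith)
  set y' := p + (a : ℂ) * (x - p) + (b : ℂ) * (rot p θ x - p) with hy'
  have hrotx : rot p θ x - p = Complex.exp (θ*Complex.I) * (x - p) := by simp [rot]
  have hkey : (a : ℂ) + (b : ℂ) * Complex.exp (θ*Complex.I)
      = (‖w‖ : ℂ) * Complex.exp (χ*Complex.I) := by
    apply Complex.ext
    · simp only [Complex.add_re, Complex.mul_re, Complex.ofReal_re, Complex.ofReal_im,
        Complex.exp_ofReal_mul_I_re, Complex.exp_ofReal_mul_I_im]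
      rw [ha, hb, Real.sin_sub]
      field_simp
      ring
    · simp only [Complex.add_im, Complex.mul_im, Complex.ofReal_re, Complex.ofReal_im,
        Complex.exp_ofReal_mul_I_re, Complex.exp_ofReal_mul_I_im]
      rw [hb]
      field_simp
      ring
  have hy'p : y' - p = (‖w‖ : ℂ) * Complex.exp (χ*Complex.I) * (x - p) := by
    rw [hy', hrotx, ← hkey]; ring
  have hrot : rot p ((j:ℝ)*θ) y' = y := by
    show p + Complex.exp ((((j:ℝ)*θ) : ℝ)*Complex.I) * (y' - p) = y
    rw [hy'p]
    have h1 : Complex.exp ((((j:ℝ)*θ) : ℝ)*Complex.I) * ((‖w‖ : ℂ) * Complex.exp (χ*Complex.I))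
        = (‖w‖ : ℂ) * Complex.exp (ψ*Complex.I) := by
      rw [mul_comm (Complex.exp _), mul_assoc, ← Complex.exp_add]
      congr 2
      push_cast
      rw [hχ]
      push_cast
      ring
    rw [← mul_assoc, h1, hexp, hψ0, Complex.norm_mul_exp_arg_mul_I, hw]
    have hxp' : x - p ≠ 0 := sub_ne_zero.2 hxp
    field_simp
    ring
  have hy'C : y' ∈ C := by
    have himg := rot_image_iter hsym j
    rw [← himg] at hy
    obtain ⟨z, hzC, hz⟩ := hy
    rwa [show z = y' from rot_injective p ((j:ℝ)*θ) (by rw [hz, hrot])] at hzC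
  refine ⟨y', ⟨hy'C, ⟨a, b, ha0, hb0, by rw [hy', hθ]⟩⟩, ?_⟩
  rw [Complex.dist_eq, Complex.dist_eq]
  have h2 : p - y' = -(y' - p) := by ring
  have h3 : p - y = -(y - p) := by ring
  rw [h2, h3, norm_neg, norm_neg, hy'p]
  have h4 : y - p = w * (x - p) := by
    rw [hw, div_mul_cancel₀ _ (sub_ne_zero.2 hxp)]
  rw [h4, norm_mul, norm_mul, norm_mul, Complex.norm_real, Real.norm_eq_abs, Complex.norm_exp_ofReal_mul_I,
    _root_.abs_of_nonneg (norm_nonneg w)]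
  ring

/-! ### small helpers -/

lemma sqrt_step (a b : ℝ) (h : a^2 ≤ b^2) (ha : 0 ≤ a) (hb : 0 ≤ b) : a ≤ b := by nlinarith

lemma sq_mono (a b : ℝ) (h : a ≤ b) (ha : 0 ≤ a) : a^2 ≤ b^2 := by nlinarith

lemma eq_of_sq_eq (a b : ℝ) (h : a^2 = b^2) (ha : 0 ≤ a) (hb : 0 ≤ b) : a = b := by nlinarith

lemma div_out (A r : ℝ) (hr : 0 < r) (h : A * r^2 ≤ r^2) : A ≤ 1 := by nlinarith [mul_pos hr hr]

lemma mul_le_mul_sq (A B r : ℝ) (h : A ≤ B) : A * r^2 ≤ B * r^2 :=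
  mul_le_mul_of_nonneg_right h (sq_nonneg r)

lemma one_sub_cos_two_mul (x : ℝ) : 1 - Real.cos (2*x) = 2*(Real.sin x)^2 := by
  nlinarith [Real.cos_two_mul x, Real.sin_sq_add_cos_sq x]

/-! ### Main theorem -/

set_option maxHeartbeats 4000000 in
/-- For a `k`-rotationally symmetric planar convex body (`k ≥ 3`), the maximum
relative diameter of the standard `k`-partition equals `max {R, 2 r sin(π/k)}`. -/
theorem stmt_3 (C : Set ℂ) (p x : ℂ) (k : ℕ) (hC : IsConvexBody C)
    (hk : 3 ≤ k) (hsym : IsRotSym C p k) (hp : p ∈ interior C)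
    (hx : x ∈ frontier C) (hxr : dist p x = infDist p (frontier C)) :
    dM C p x k =
      max (circumrad C p) (2 * infDist p (frontier C) * Real.sin (Real.pi / k)) := by
  obtain ⟨hcomp, hconv, hint⟩ := hC
  have hπ := Real.pi_pos
  have hk0 : (0:ℝ) < k := by positivity
  set θ := 2*Real.pi/k with hθdef
  have hθ0 : 0 < θ := by positivity
  have hθle : θ ≤ 2*Real.pi/3 := by
    rw [hθdef]; apply div_le_div_of_nonneg_left (by positivity) (by norm_num)
    exact_mod_cast hk
  have hθπ : θ < Real.pi := by linarith
  have hcl : IsClosed C := hcomp.isClosed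
  have hCne : C.Nonempty := ⟨p, interior_subset hp⟩
  have hfr_cl : IsClosed (frontier C) := isClosed_frontier
  have hfr_ne : (frontier C).Nonempty := ⟨x, hx⟩
  set r := infDist p (frontier C) with hrdef
  have hpf : p ∉ frontier C := fun h => h.2 hp
  have hr0 : 0 < r := (hfr_cl.notMem_iff_infDist_pos hfr_ne).1 hpf
  have hxpr : ‖(x - p)‖ = r := by
    rw [← hxr, Complex.dist_eq, show p - x = -(x-p) by ring, norm_neg]
  have hxp : x ≠ p := by
    intro h
    rw [h] at hxpr; simp at hxpr; exact hr0.ne' hxpr.symm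
  have hball : closedBall p r ⊆ C := closedBall_subset_of_interior hcl hconv hp hr0
  have hxC : x ∈ C := hcl.frontier_subset hx
  have hpC : p ∈ C := interior_subset hp
  obtain ⟨y₀, hy₀C, hReq, hmax⟩ := circumrad_spec hcomp hCne p
  set R := circumrad C p with hRdef
  have hRub : ∀ y ∈ C, dist p y ≤ R := by
    intro y hy; rw [hReq]; exact hmax y hy
  have hrR : r ≤ R := by
    have := hRub x hxC
    rw [hxr] at this; exact this
  have hR0 : 0 < R := lt_of_lt_of_le hr0 hrR
  have hk1 : (1:ℝ) ≤ k := by exact_mod_cast (by omega : 1 ≤ k)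
  have hsink : 0 ≤ Real.sin (Real.pi/k) := by
    apply Real.sin_nonneg_of_nonneg_of_le_pi (by positivity)
    rw [div_le_iff₀ hk0]
    calc Real.pi = Real.pi * 1 := by ring
    _ ≤ Real.pi * k := mul_le_mul_of_nonneg_left hk1 (le_of_lt hπ)
  set M := max R (2 * r * Real.sin (Real.pi/k)) with hM
  have hM0 : 0 ≤ M := le_trans (le_of_lt hR0) (le_max_left _ _)
  -- rotation symmetric data
  have hsym' : rot p θ '' C = C := hsym
  set e := Complex.exp (θ*Complex.I) with he
  have hrotx : rot p θ x - p = e * (x - p) := by simp [rot, he]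
  have hρxd : ‖(rot p θ x - p)‖ = r := by
    rw [hrotx, norm_mul, he, Complex.norm_exp_ofReal_mul_I, one_mul, hxpr]
  have hρx_int : rot p θ x ∉ interior C := by
    intro h
    have him : rot p θ '' interior C = interior C := by
      rw [rot_image_interior, hsym']
    rw [← him] at h
    obtain ⟨z, hz, hzeq⟩ := h
    have hzx : z = x := rot_injective p θ hzeq
    exact hx.2 (hzx ▸ hz)
  -- trig facts
  set c := Real.cos θ with hc
  set s := Real.sin θ with hs
  have hs1 : s^2 + c^2 = 1 := Real.sin_sq_add_cos_sq θ
  have hc1 : c ≤ 1 := Real.cos_le_one θ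
  have hcge : -(1/2) ≤ c := by
    have h1 : Real.cos (2*Real.pi/3) ≤ Real.cos θ :=
      Real.cos_le_cos_of_nonneg_of_le_pi (le_of_lt hθ0) (by linarith) hθle
    have h2 : Real.cos (2*Real.pi/3) = -(1/2) := by
      rw [show (2*Real.pi/3 : ℝ) = Real.pi - Real.pi/3 by ring, Real.cos_pi_sub,
        Real.cos_pi_div_three]
    rw [hc]; rw [h2] at h1; exact h1
  have hcsin : 1 - c = 2 * (Real.sin (Real.pi/k))^2 := by
    have hhalf : θ = 2 * (Real.pi/k) := by rw [hθdef]; ring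
    rw [hc, hhalf]
    exact one_sub_cos_two_mul (Real.pi/k)
  -- the two halfplane constraints
  have hhx : ∀ y ∈ C, ((y-p) * (starRingEnd ℂ) (x-p)).re ≤ r^2 :=
    fun y hy => halfplane hconv hr0 hball hx.2 hxpr hy
  have hhρ : ∀ y ∈ C, ((y-p) * (starRingEnd ℂ) (rot p θ x - p)).re ≤ r^2 :=
    fun y hy => halfplane hconv hr0 hball hρx_int hρxd hy
  have hmc : (x - p) * (starRingEnd ℂ) (x - p) = ((r^2 : ℝ) : ℂ) := by
    rw [Complex.mul_conj]
    norm_cast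
    rw [← Complex.sq_norm, hxpr]
  -- coordinates of a sector point
  have hcoord : ∀ y ∈ C ∩ sector p x k, ∃ a1 a2 : ℝ, 0 ≤ a1 ∧ 0 ≤ a2 ∧
      y - p = ((a1 : ℂ) + (a2 : ℂ)*e) * (x - p) ∧
      a1 + c*a2 ≤ 1 ∧ c*a1 + a2 ≤ 1 ∧
      a1^2 + a2^2 + 2*c*a1*a2 ≤ (R/r)^2 := by
    rintro y ⟨hyC, a1, a2, ha1, ha2, hyeq⟩
    refine ⟨a1, a2, ha1, ha2, ?_, ?_, ?_, ?_⟩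
    · rw [hyeq, ← hθdef, hrotx]; ring
    · -- first halfplane
      have h1 := hhx y hyC
      have h2 : y - p = ((a1 : ℂ) + (a2 : ℂ)*e) * (x - p) := by
        rw [hyeq, ← hθdef, hrotx]; ring
      rw [h2, mul_assoc, hmc] at h1
      have h3 : ((((a1 : ℂ) + (a2 : ℂ)*e) * ((r^2 : ℝ) : ℂ))).re = (a1 + a2*c) * r^2 := by
        rw [mul_comm, Complex.re_ofReal_mul]
        simp only [Complex.add_re, Complex.mul_re, Complex.add_im, Complex.mul_im,
          Complex.ofReal_re, Complex.ofReal_im, he, Complex.exp_ofReal_mul_I_re,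
          Complex.exp_ofReal_mul_I_im, hc]
        ring
      rw [h3] at h1
      have := div_out (a1 + a2*c) r hr0 h1
      linarith [this]
    · -- second halfplane
      have h1 := hhρ y hyC
      have h2 : y - p = ((a1 : ℂ) + (a2 : ℂ)*e) * (x - p) := by
        rw [hyeq, ← hθdef, hrotx]; ring
      rw [h2, hrotx] at h1
      have h4 : ((a1 : ℂ) + (a2 : ℂ)*e) * (x - p) * (starRingEnd ℂ) (e * (x-p))
          = (((a1 : ℂ) + (a2 : ℂ)*e) * (starRingEnd ℂ) e) * ((r^2 : ℝ) : ℂ) := by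
        rw [map_mul, ← hmc]; ring
      rw [h4] at h1
      have h5 : ((((a1 : ℂ) + (a2 : ℂ)*e) * (starRingEnd ℂ) e) * ((r^2 : ℝ) : ℂ)).re
          = (a1*c + a2*(s^2+c^2)) * r^2 := by
        rw [mul_comm, Complex.re_ofReal_mul]
        simp only [Complex.add_re, Complex.mul_re, Complex.add_im, Complex.mul_im,
          Complex.ofReal_re, Complex.ofReal_im, he, Complex.exp_ofReal_mul_I_re,
          Complex.exp_ofReal_mul_I_im, Complex.conj_re, Complex.conj_im, hc, hs]
        ring
      rw [h5, hs1] at h1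
      have h1' : (a1*c + a2*1) * r^2 ≤ r^2 := h1
      have := div_out (a1*c + a2*1) r hr0 h1'
      linarith [this]
    · -- norm constraint
      have h2 : y - p = ((a1 : ℂ) + (a2 : ℂ)*e) * (x - p) := by
        rw [hyeq, ← hθdef, hrotx]; ring
      have h6 : dist p y ≤ R := hRub y hyC
      have h7 : ‖(y - p)‖ ≤ R := by
        rw [Complex.dist_eq, show p - y = -(y-p) by ring, norm_neg] at h6
        exact h6
      have h8 : Complex.normSq (y - p) ≤ R^2 := by
        rw [← Complex.sq_norm]
        exact sq_mono _ _ h7 (norm_nonneg (y-p))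
      have h9 : Complex.normSq (y - p) = (a1^2 + a2^2 + 2*c*a1*a2) * r^2 := by
        rw [h2, map_mul, show Complex.normSq (x-p) = r^2 by rw [← Complex.sq_norm, hxpr]]
        have h10 : Complex.normSq ((a1 : ℂ) + (a2 : ℂ)*e) = a1^2 + a2^2 + 2*c*a1*a2 := by
          simp only [Complex.normSq_apply, Complex.add_re, Complex.add_im, Complex.mul_re,
            Complex.mul_im, Complex.ofReal_re, Complex.ofReal_im, he,
            Complex.exp_ofReal_mul_I_re, Complex.exp_ofReal_mul_I_im]
          rw [← hc, ← hs]; linear_combination a2^2 * hs1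
        rw [h10]
      rw [h9] at h8
      rw [div_pow, le_div_iff₀ (by positivity)]
      exact h8
  -- upper bound for distances in the piece
  have hub : ∀ y ∈ C ∩ sector p x k, ∀ z ∈ C ∩ sector p x k, dist y z ≤ M := by
    intro y hy z hz
    obtain ⟨a1, a2, ha1, ha2, hya, hA1, hA2, hQa⟩ := hcoord y hy
    obtain ⟨b1, b2, hb1, hb2, hzb, hB1, hB2, hQb⟩ := hcoord z hz
    have hρ1 : 1 ≤ R/r := by rw [le_div_iff₀ hr0]; linarith
    have hkey := key_alg c (R/r) a1 a2 b1 b2 hcge hc1 ha1 ha2 hb1 hb2 hA1 hA2 hB1 hB2 hQa hQb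
    have hyz : y - z = (((a1-b1 : ℝ) : ℂ) + ((a2-b2 : ℝ) : ℂ)*e) * (x - p) := by
      have : y - z = (y - p) - (z - p) := by ring
      rw [this, hya, hzb]; push_cast; ring
    have hd2 : (dist y z)^2 = ((a1-b1)^2 + (a2-b2)^2 + 2*c*(a1-b1)*(a2-b2)) * r^2 := by
      rw [Complex.dist_eq, Complex.sq_norm, hyz, map_mul,
        show Complex.normSq (x-p) = r^2 by rw [← Complex.sq_norm, hxpr]]
      have h10 : Complex.normSq (((a1-b1 : ℝ) : ℂ) + ((a2-b2 : ℝ) : ℂ)*e)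
          = (a1-b1)^2 + (a2-b2)^2 + 2*c*(a1-b1)*(a2-b2) := by
        simp only [Complex.normSq_apply, Complex.add_re, Complex.add_im, Complex.mul_re,
          Complex.mul_im, Complex.ofReal_re, Complex.ofReal_im, he,
          Complex.exp_ofReal_mul_I_re, Complex.exp_ofReal_mul_I_im]
        rw [← hc, ← hs]; linear_combination (a2-b2)^2 * hs1
      rw [h10]
    have hM2 : (dist y z)^2 ≤ M^2 := by
      rcases le_or_gt ((R/r)^2) (2*(1-c)) with hcase | hcase
      · have h11 : (a1-b1)^2 + (a2-b2)^2 + 2*c*(a1-b1)*(a2-b2) ≤ 2*(1-c) := by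
          rw [max_eq_right hcase] at hkey; exact hkey
        have h12 : (dist y z)^2 ≤ 2*(1-c)*r^2 := by
          rw [hd2]; exact mul_le_mul_sq _ _ r h11
        have h13 : 2*(1-c)*r^2 = (2*r*Real.sin (Real.pi/k))^2 := by
          rw [hcsin]; ring
        have h14 : 2*r*Real.sin (Real.pi/k) ≤ M := le_max_right _ _
        have h16 : (2*r*Real.sin (Real.pi/k))^2 ≤ M^2 :=
          sq_mono _ _ h14 (mul_nonneg (mul_nonneg (by norm_num : (0:ℝ) ≤ 2) (le_of_lt hr0)) hsink)
        calc (dist y z)^2 ≤ 2*(1-c)*r^2 := h12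
        _ = (2*r*Real.sin (Real.pi/k))^2 := h13
        _ ≤ M^2 := h16
      · have h11 : (a1-b1)^2 + (a2-b2)^2 + 2*c*(a1-b1)*(a2-b2) ≤ (R/r)^2 := by
          rw [max_eq_left (le_of_lt hcase)] at hkey; exact hkey
        have h15 : (R/r)^2 * r^2 = R^2 := by field_simp
        have h12 : (dist y z)^2 ≤ R^2 := by
          rw [hd2, ← h15]; exact mul_le_mul_sq _ _ r h11
        have h14 : R ≤ M := le_max_left _ _
        calc (dist y z)^2 ≤ R^2 := h12
        _ ≤ M^2 := sq_mono _ _ h14 (le_of_lt hR0)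
    exact sqrt_step _ _ hM2 dist_nonneg hM0
  -- bounded piece
  have hbdd : Bornology.IsBounded (C ∩ sector p x k) :=
    hcomp.isBounded.subset inter_subset_left
  have hpmem : p ∈ C ∩ sector p x k := by
    refine ⟨hpC, 0, 0, le_rfl, le_rfl, by simp⟩
  have hxmem : x ∈ C ∩ sector p x k := by
    refine ⟨hxC, 1, 0, by norm_num, le_rfl, by push_cast; ring⟩
  have hρxC : rot p θ x ∈ C := by
    rw [← hsym']; exact mem_image_of_mem _ hxC
  have hρxmem : rot p θ x ∈ C ∩ sector p x k := by
    refine ⟨hρxC, 0, 1, le_rfl, by norm_num, by rw [← hθdef]; push_cast; ring⟩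
  -- lower bound
  apply le_antisymm
  · exact Metric.diam_le_of_forall_dist_le hM0 hub
  · apply max_le
    · -- R ≤ diam
      obtain ⟨y', hy'mem, hy'dist⟩ := exists_sector_point hk hsym' hxp hy₀C
      have h1 : dist p y' ≤ Metric.diam (C ∩ sector p x k) :=
        Metric.dist_le_diam_of_mem hbdd hpmem hy'mem
      rw [hy'dist, ← hReq] at h1
      exact h1
    · -- 2 r sin(π/k) ≤ diam
      have h1 : dist x (rot p θ x) ≤ Metric.diam (C ∩ sector p x k) :=
        Metric.dist_le_diam_of_mem hbdd hxmem hρxmem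
      have h2 : dist x (rot p θ x) = 2*r*Real.sin (Real.pi/k) := by
        have hρeq : rot p θ x = p + e * (x - p) := by
          have := hrotx
          rw [sub_eq_iff_eq_add] at this
          rw [this]; ring
        have h3 : x - rot p θ x = (1 - e) * (x - p) := by
          rw [hρeq]; ring
        have h4 : (dist x (rot p θ x))^2 = (2*r*Real.sin (Real.pi/k))^2 := by
          rw [Complex.dist_eq, Complex.sq_norm, h3, map_mul,
            show Complex.normSq (x-p) = r^2 by rw [← Complex.sq_norm, hxpr]]
          have h5 : Complex.normSq (1 - e) = 2*(1-c) := by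
            simp only [Complex.normSq_apply, Complex.sub_re, Complex.sub_im,
              Complex.one_re, Complex.one_im, he,
              Complex.exp_ofReal_mul_I_re, Complex.exp_ofReal_mul_I_im]
            rw [← hc, ← hs]; linear_combination hs1
          rw [h5, hcsin]; ring
        exact eq_of_sq_eq _ _ h4 dist_nonneg
          (mul_nonneg (mul_nonneg (by norm_num : (0:ℝ) ≤ 2) (le_of_lt hr0)) hsink)
      rw [← h2]
      exact h1
end

section
/- Let C be a planar convex body and p a point in its interior, and let a, b be integers with 3 ≤ a ≤ b such that C is both a-rotationally symmetric and b-rotationally symmetric about p. Then d_M(P_a) ≥ d_M(P_b), i.e. diam(C ∩ S_a) ≥ diam(C ∩ S_b). In particular, if C is multi-rotationally symmetric with minimal degree at least 3 and k_1 < k_2 < … < k_n are the divisors greater than 1 of its maximal degree, then d_M(P_{k_1}) ≥ d_M(P_{k_2}) ≥ … ≥ d_M(P_{k_n}). -/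
open Metric Set

lemma key (α β : ℝ) : (Real.sin α : ℂ) * Complex.exp (β * Complex.I)
    = (Real.sin (α - β) : ℂ) + (Real.sin β : ℂ) * Complex.exp (α * Complex.I) := by
  rw [Complex.exp_mul_I, Complex.exp_mul_I]
  push_cast [Real.sin_sub]
  ring

lemma sector_mono (p x : ℂ) (a b : ℕ) (ha : 3 ≤ a) (hab : a ≤ b) :
    sector p x b ⊆ sector p x a := by
  have hb : 3 ≤ b := ha.trans hab
  have hpi := Real.pi_pos
  have ha0 : (0:ℝ) < a := by exact_mod_cast Nat.lt_of_lt_of_le (by norm_num) ha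
  have hb0 : (0:ℝ) < b := by exact_mod_cast Nat.lt_of_lt_of_le (by norm_num) hb
  set α : ℝ := 2 * Real.pi / a with hα
  set β : ℝ := 2 * Real.pi / b with hβ
  have hαpos : 0 < α := by positivity
  have hβpos : 0 < β := by positivity
  have hβα : β ≤ α := by
    apply div_le_div_of_nonneg_left (by positivity) ha0
    exact_mod_cast hab
  have hαlt : α < Real.pi := by
    rw [hα, div_lt_iff₀ ha0]
    have : (3:ℝ) ≤ a := by exact_mod_cast ha
    nlinarith
  have hsinα : 0 < Real.sin α := Real.sin_pos_of_pos_of_lt_pi hαpos hαlt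
  have hsinβ : 0 ≤ Real.sin β :=
    (Real.sin_pos_of_pos_of_lt_pi hβpos (lt_of_le_of_lt hβα hαlt)).le
  have hsinab : 0 ≤ Real.sin (α - β) :=
    Real.sin_nonneg_of_nonneg_of_le_pi (by linarith) (by linarith)
  rintro z ⟨s, t, hs, ht, rfl⟩
  refine ⟨s + t * (Real.sin (α - β) / Real.sin α), t * (Real.sin β / Real.sin α),
    by positivity, by positivity, ?_⟩
  have hk := key α β
  have hsin0 : (Real.sin α : ℂ) ≠ 0 := by exact_mod_cast hsinα.ne'
  simp only [rot, hα, hβ] at *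
  push_cast at hk hsin0 ⊢
  field_simp [hsin0]
  rw [show (2 * (Real.pi:ℂ) * Complex.I / (b:ℂ)) = 2 * (Real.pi:ℂ) / (b:ℂ) * Complex.I by ring,
    show (2 * (Real.pi:ℂ) * Complex.I / (a:ℂ)) = 2 * (Real.pi:ℂ) / (a:ℂ) * Complex.I by ring]
  have e : Complex.sin (2 * (Real.pi:ℂ) * (1 / (a:ℂ) - 1 / (b:ℂ))) = Complex.sin (2 * (Real.pi:ℂ) / (a:ℂ) - 2 * (Real.pi:ℂ) / (b:ℂ)) :=
    congrArg Complex.sin (by ring)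
  linear_combination (↑t * (x - p)) * hk - (↑t * (x - p)) * e
/-- If `C` is both `a`- and `b`-rotationally symmetric about `p`, with
`3 ≤ a ≤ b`, then `d_M(P_a) ≥ d_M(P_b)`. -/
theorem stmt_4 (C : Set ℂ) (p x : ℂ) (a b : ℕ) (hC : IsConvexBody C)
    (ha : 3 ≤ a) (hab : a ≤ b) (hsa : IsRotSym C p a) (hsb : IsRotSym C p b)
    (hp : p ∈ interior C) (hx : x ∈ frontier C)
    (hxr : dist p x = infDist p (frontier C)) :
    dM C p x b ≤ dM C p x a := by
  exact Metric.diam_mono (inter_subset_inter_right _ (sector_mono p x a b ha hab))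
    (hC.1.isBounded.subset inter_subset_left)
end

section
/- Let C be a planar convex body that is k-rotationally symmetric about a point p in its interior, for an integer k ≥ 6. Then d_M(P_k) = R, i.e. diam(C ∩ S_k) = R. In particular, if C is multi-rotationally symmetric with minimal degree χ_C ≥ 6, then d_M(P_{χ_C}) = R. -/
open Metric Set

lemma key_ineq (a1 b1 a2 b2 c s : ℝ) (ha1 : 0 ≤ a1) (hb1 : 0 ≤ b1)
    (ha2 : 0 ≤ a2) (hb2 : 0 ≤ b2) (hc : 1/2 ≤ c) (hsc : s^2 + c^2 = 1) :
    ((a1+b1*c)^2+(b1*s)^2)*((a2+b2*c)^2+(b2*s)^2)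
      ≤ 4*((a1+b1*c)*(a2+b2*c)+(b1*s)*(b2*s))^2 := by
  set P := (a1+b1*c)*(a2+b2*c)+(b1*s)*(b2*s) with hPdef
  have hs2 : s^2 ≤ 3/4 := by nlinarith
  have hP2 : a1*b2 + a2*b1 ≤ 2*P := by
    have h1 : b1*b2*(s^2+c^2) = b1*b2 := by rw [hsc]; ring
    nlinarith [mul_nonneg ha1 ha2, mul_nonneg hb1 hb2, mul_nonneg ha1 hb2, mul_nonneg ha2 hb1]
  have hP0 : 0 ≤ P := by
    have := mul_nonneg (mul_nonneg ha1 hb2) (le_trans (by norm_num) hc)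
    nlinarith [mul_nonneg ha1 hb2, mul_nonneg ha2 hb1]
  have hD : (a1*b2 - a2*b1)^2 ≤ 4*P^2 := by nlinarith [mul_nonneg (mul_nonneg ha1 hb2) (mul_nonneg ha2 hb1), mul_self_le_mul_self (by positivity : (0:ℝ) ≤ a1*b2+a2*b1) hP2]
  have hid : ((a1+b1*c)^2+(b1*s)^2)*((a2+b2*c)^2+(b2*s)^2)
      = P^2 + s^2*(a1*b2 - a2*b1)^2 := by rw [hPdef]; ring
  rw [hid]
  nlinarith [sq_nonneg (a1*b2 - a2*b1), sq_nonneg s]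

lemma key_P_nonneg (a1 b1 a2 b2 c : ℝ) (ha1 : 0 ≤ a1) (hb1 : 0 ≤ b1)
    (ha2 : 0 ≤ a2) (hb2 : 0 ≤ b2) (hc : 1/2 ≤ c) (s : ℝ) :
    0 ≤ (a1+b1*c)*(a2+b2*c)+(b1*s)*(b2*s) := by
  have hc0 : (0:ℝ) ≤ c := le_trans (by norm_num) hc
  have h1 : 0 ≤ (a1+b1*c) := by positivity
  have h2 : 0 ≤ (a2+b2*c) := by positivity
  nlinarith [mul_nonneg h1 h2, mul_nonneg hb1 hb2, sq_nonneg s, mul_nonneg (mul_nonneg hb1 hb2) (sq_nonneg s)]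

lemma cone_dist (w1 w2 : ℂ) (a1 b1 a2 b2 c s : ℝ)
    (ha1 : 0 ≤ a1) (hb1 : 0 ≤ b1) (ha2 : 0 ≤ a2) (hb2 : 0 ≤ b2)
    (hc : 1/2 ≤ c) (hsc : s^2 + c^2 = 1)
    (h1 : w1 = Complex.mk (a1+b1*c) (b1*s)) (h2 : w2 = Complex.mk (a2+b2*c) (b2*s)) :
    ‖w1 - w2‖ ≤ max ‖w1‖ ‖w2‖ := by
  set x1 := a1+b1*c with hx1; set y1 := b1*s with hy1
  set x2 := a2+b2*c with hx2; set y2 := b2*s with hy2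
  have hA : ‖w1‖ ^ 2 = x1^2 + y1^2 := by
    rw [Complex.sq_norm, Complex.normSq_apply, h1]; ring
  have hB : ‖w2‖ ^ 2 = x2^2 + y2^2 := by
    rw [Complex.sq_norm, Complex.normSq_apply, h2]; ring
  have hAB : ‖w1 - w2‖ ^ 2 = (x1-x2)^2 + (y1-y2)^2 := by
    rw [Complex.sq_norm, Complex.normSq_apply, h1, h2]
    simp [Complex.sub_re, Complex.sub_im]; ring
  have hP0 : 0 ≤ x1*x2 + y1*y2 := key_P_nonneg a1 b1 a2 b2 c ha1 hb1 ha2 hb2 hc s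
  have hkey : (x1^2+y1^2)*(x2^2+y2^2) ≤ 4*(x1*x2+y1*y2)^2 :=
    key_ineq a1 b1 a2 b2 c s ha1 hb1 ha2 hb2 hc hsc
  rcases le_total ‖w1‖ ‖w2‖ with h | h
  · rw [max_eq_right h]
    refine (pow_le_pow_iff_left₀ (norm_nonneg _) (norm_nonneg _) (two_ne_zero)).mp ?_
    have hAle : x1^2+y1^2 ≤ x2^2+y2^2 := by
      rw [← hA, ← hB]; exact pow_le_pow_left₀ (norm_nonneg _) h 2
    have hA0 : (0:ℝ) ≤ x1^2+y1^2 := by positivity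
    have hsq : (x1^2+y1^2)^2 ≤ 4*(x1*x2+y1*y2)^2 := by
      calc (x1^2+y1^2)^2 = (x1^2+y1^2)*(x1^2+y1^2) := sq (x1^2+y1^2)
        _ ≤ (x1^2+y1^2)*(x2^2+y2^2) := mul_le_mul_of_nonneg_left hAle hA0
        _ ≤ 4*(x1*x2+y1*y2)^2 := hkey
    have h2P : x1^2+y1^2 ≤ 2*(x1*x2+y1*y2) := by
      have h4 : (x1^2+y1^2)^2 ≤ (2*(x1*x2+y1*y2))^2 := by
        have : (2*(x1*x2+y1*y2))^2 = 4*(x1*x2+y1*y2)^2 := by ring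
        rw [this]; exact hsq
      exact (pow_le_pow_iff_left₀ hA0 (by positivity) two_ne_zero).mp h4
    have hexp : (x1-x2)^2+(y1-y2)^2 = (x1^2+y1^2) + (x2^2+y2^2) - 2*(x1*x2+y1*y2) := by ring
    rw [hAB, hB, hexp]; linarith
  · rw [max_eq_left h]
    refine (pow_le_pow_iff_left₀ (norm_nonneg _) (norm_nonneg _) (two_ne_zero)).mp ?_
    have hAle : x2^2+y2^2 ≤ x1^2+y1^2 := by
      rw [← hA, ← hB]; exact pow_le_pow_left₀ (norm_nonneg _) h 2
    have hA0 : (0:ℝ) ≤ x2^2+y2^2 := by positivity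
    have hsq : (x2^2+y2^2)^2 ≤ 4*(x1*x2+y1*y2)^2 := by
      calc (x2^2+y2^2)^2 = (x2^2+y2^2)*(x2^2+y2^2) := sq (x2^2+y2^2)
        _ ≤ (x1^2+y1^2)*(x2^2+y2^2) := mul_le_mul_of_nonneg_right hAle hA0
        _ ≤ 4*(x1*x2+y1*y2)^2 := hkey
    have h2P : x2^2+y2^2 ≤ 2*(x1*x2+y1*y2) := by
      have h4 : (x2^2+y2^2)^2 ≤ (2*(x1*x2+y1*y2))^2 := by
        have : (2*(x1*x2+y1*y2))^2 = 4*(x1*x2+y1*y2)^2 := by ring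
        rw [this]; exact hsq
      exact (pow_le_pow_iff_left₀ hA0 (by positivity) two_ne_zero).mp h4
    have hexp : (x1-x2)^2+(y1-y2)^2 = (x1^2+y1^2) + (x2^2+y2^2) - 2*(x1*x2+y1*y2) := by ring
    rw [hAB, hA, hexp]; linarith


lemma exists_rep (α : ℝ) (hα0 : 0 < α) (hαle : α ≤ Real.pi/3) (w : ℂ) :
    ∃ (j : ℕ) (a b : ℝ), 0 ≤ a ∧ 0 ≤ b ∧
      Complex.exp ((j*α : ℝ)*Complex.I) * w
        = (↑a + ↑b * Complex.exp ((α:ℝ)*Complex.I)) := by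
  have hpi := Real.pi_pos
  have hαpi : α < Real.pi := by linarith
  have hs : 0 < Real.sin α := Real.sin_pos_of_pos_of_lt_pi hα0 hαpi
  by_cases hw : w = 0
  · exact ⟨0, 0, 0, le_refl _, le_refl _, by simp [hw]⟩
  · set m := ‖w‖ with hm
    set θ := Complex.arg w with hθ
    have hm0 : 0 < m := by simpa [hm] using (norm_pos_iff.mpr hw)
    have hθ1 : θ ≤ Real.pi := Complex.arg_le_pi w
    have hθ2 : -Real.pi < θ := Complex.neg_pi_lt_arg w
    set t := 2*Real.pi - θ with ht
    have ht0 : 0 < t := by simp [ht]; linarith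
    set j : ℕ := (⌈t/α⌉).toNat with hj
    have hceil : (0:ℤ) ≤ ⌈t/α⌉ := by
      have : (0:ℝ) < t/α := div_pos ht0 hα0
      exact_mod_cast le_of_lt (Int.ceil_pos.mpr this)
    have hjr : (j:ℝ) = (⌈t/α⌉ : ℤ) := by
      rw [hj]; exact_mod_cast congrArg (Int.cast : ℤ → ℝ) (Int.toNat_of_nonneg hceil)
    set β := j*α + θ - 2*Real.pi with hβ
    have hβ0 : 0 ≤ β := by
      have h1 : t/α ≤ (⌈t/α⌉ : ℝ) := Int.le_ceil _
      have h2 : t ≤ j*α := by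
        rw [hjr]
        calc t = (t/α)*α := by field_simp
          _ ≤ (⌈t/α⌉ : ℝ)*α := by exact mul_le_mul_of_nonneg_right h1 (le_of_lt hα0)
      simp [hβ, ht] at h2 ⊢; linarith
    have hβα : β < α := by
      have h1 : (⌈t/α⌉ : ℝ) < t/α + 1 := Int.ceil_lt_add_one _
      have h2 : (j:ℝ)*α < t + α := by
        rw [hjr]
        calc (⌈t/α⌉:ℝ)*α < (t/α+1)*α := by exact mul_lt_mul_of_pos_right h1 hα0
          _ = t + α := by field_simp
      simp [hβ, ht]; linarith
    refine ⟨j, m * Real.sin (α-β) / Real.sin α, m * Real.sin β / Real.sin α, ?_, ?_, ?_⟩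
    · have : 0 ≤ Real.sin (α-β) := Real.sin_nonneg_of_nonneg_of_le_pi (by linarith) (by linarith)
      positivity
    · have : 0 ≤ Real.sin β := Real.sin_nonneg_of_nonneg_of_le_pi hβ0 (by linarith)
      positivity
    · have hwrep : w = ↑m * Complex.exp (↑θ * Complex.I) := (Complex.norm_mul_exp_arg_mul_I w).symm
      rw [hwrep]
      have hlhs : Complex.exp ((j*α : ℝ)*Complex.I) * (↑m * Complex.exp (↑θ * Complex.I))
          = ↑m * Complex.exp ((β:ℝ) * Complex.I) := by
        have e1 : ((β:ℝ) : ℂ) * Complex.I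
            = ((↑j*α:ℝ) : ℂ)*Complex.I + ((θ:ℝ):ℂ)*Complex.I - (2*(Real.pi:ℂ))*Complex.I := by
          rw [hβ]; push_cast; ring
        rw [e1, Complex.exp_sub, Complex.exp_add, Complex.exp_two_pi_mul_I, div_one]
        ring
      rw [hlhs]
      apply Complex.ext
      · simp only [Complex.add_re, Complex.mul_re, Complex.mul_im, Complex.ofReal_re,
          Complex.ofReal_im, Complex.exp_ofReal_mul_I_re, Complex.exp_ofReal_mul_I_im,
          Real.sin_sub]
        field_simp
        ring
      · simp only [Complex.add_im, Complex.mul_re, Complex.mul_im, Complex.ofReal_re,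
          Complex.ofReal_im, Complex.exp_ofReal_mul_I_re, Complex.exp_ofReal_mul_I_im]
        field_simp
        ring

/-- For a `k`-rotationally symmetric planar convex body with `k ≥ 6`,
the maximum relative diameter of the standard `k`-partition equals the
circumradius `R`. -/
theorem stmt_6 (C : Set ℂ) (p x : ℂ) (k : ℕ) (hC : IsConvexBody C)
    (hk : 6 ≤ k) (hsym : IsRotSym C p k) (hp : p ∈ interior C)
    (hx : x ∈ frontier C) (hxr : dist p x = infDist p (frontier C)) :
    dM C p x k = circumrad C p := by
  obtain ⟨hCc, hconv, hCint⟩ := hC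
  have hpi := Real.pi_pos
  have hk6 : (6:ℝ) ≤ (k:ℝ) := by exact_mod_cast hk
  have hk0 : (0:ℝ) < (k:ℝ) := by linarith
  set α := 2 * Real.pi / (k:ℝ) with hα
  have hα0 : 0 < α := by positivity
  have hαle : α ≤ Real.pi / 3 := by
    rw [hα]
    rw [div_le_div_iff₀ hk0 (by norm_num : (0:ℝ) < 3)]
    nlinarith
  have hαpi : α < Real.pi := by linarith
  set e := Complex.exp ((α:ℝ) * Complex.I) with he
  have hcos : 1/2 ≤ Real.cos α := by
    have := Real.cos_le_cos_of_nonneg_of_le_pi (le_of_lt hα0) (by linarith) hαle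
    rw [Real.cos_pi_div_three] at this; linarith
  have hsc : Real.sin α ^2 + Real.cos α ^2 = 1 := Real.sin_sq_add_cos_sq α
  have hpC : p ∈ C := interior_subset hp
  have hne : C.Nonempty := ⟨p, hpC⟩
  have hxp : x - p ≠ 0 := by
    refine sub_ne_zero.mpr (fun hxeq => ?_)
    exact hx.2 (hxeq ▸ hp)
  -- rotation basics
  have hrot : ∀ z, rot p α z = p + e * (z - p) := fun z => rfl
  have hmem : ∀ z ∈ C, rot p α z ∈ C := by
    intro z hz
    rw [← hsym]; exact ⟨z, hz, rfl⟩
  have hiter : ∀ (j : ℕ) (z : ℂ),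
      (rot p α)^[j] z = p + Complex.exp ((j*α : ℝ)*Complex.I) * (z - p) := by
    intro j
    induction j with
    | zero => intro z; simp
    | succ n ih =>
      intro z
      rw [Function.iterate_succ_apply', ih, hrot]
      have h2 : ((((n:ℕ)+1 : ℕ) : ℝ)*α : ℝ) = (n*α : ℝ) + α := by push_cast; ring
      rw [h2]
      push_cast
      rw [add_mul, Complex.exp_add, ← he]
      ring
  have hmemiter : ∀ (j : ℕ), ∀ z ∈ C, (rot p α)^[j] z ∈ C := by
    intro j
    induction j with
    | zero => intro z hz; simpa using hz
    | succ n ih =>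
      intro z hz
      rw [Function.iterate_succ_apply']
      exact hmem _ (ih z hz)
  -- maximum point
  obtain ⟨y₀, hy₀C, hy₀⟩ := hCc.exists_isMaxOn hne
    ((continuous_const.dist continuous_id).continuousOn)
  rw [isMaxOn_iff] at hy₀
  have hbdd : BddAbove (Set.range fun y => ⨆ _ : y ∈ C, dist p y) := by
    refine ⟨dist p y₀, ?_⟩
    rintro _ ⟨y, rfl⟩
    exact Real.iSup_le (fun h => hy₀ y h) dist_nonneg
  have hR : circumrad C p = dist p y₀ := by
    refine le_antisymm ?_ ?_
    · exact Real.iSup_le (fun y => Real.iSup_le (fun h => hy₀ y h) dist_nonneg) dist_nonneg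
    · have h1 : dist p y₀ = ⨆ _ : y₀ ∈ C, dist p y₀ := by
        haveI : Nonempty (y₀ ∈ C) := ⟨hy₀C⟩
        rw [ciSup_const]
      rw [circumrad, h1]
      exact le_ciSup hbdd y₀
  -- sector characterization
  have hsec : ∀ z, z ∈ sector p x k ↔
      ∃ a b : ℝ, 0 ≤ a ∧ 0 ≤ b ∧ z - p = (↑a + ↑b*e)*(x-p) := by
    intro z
    constructor
    · rintro ⟨a, b, ha, hb, hz⟩
      exact ⟨a, b, ha, hb, by rw [hz, rot]; ring⟩
    · rintro ⟨a, b, ha, hb, hz⟩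
      refine ⟨a, b, ha, hb, ?_⟩
      rw [rot]
      have : z = p + (z - p) := by ring
      rw [this, hz]; ring
  have hpsec : p ∈ sector p x k := ⟨0, 0, le_refl _, le_refl _, by simp⟩
  -- every point of C ∩ sector is within dist p ≤ dist p y₀, and mutual dist ≤ ...
  rw [dM, hR]
  refine le_antisymm ?_ ?_
  · -- upper bound
    refine Metric.diam_le_of_forall_dist_le dist_nonneg ?_
    rintro u ⟨huC, husec⟩ v ⟨hvC, hvsec⟩
    obtain ⟨a1, b1, ha1, hb1, hu⟩ := (hsec u).mp husec
    obtain ⟨a2, b2, ha2, hb2, hv⟩ := (hsec v).mp hvsec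
    have he' : e = Complex.mk (Real.cos α) (Real.sin α) := by
      apply Complex.ext <;>
        simp [he, Complex.exp_ofReal_mul_I_re, Complex.exp_ofReal_mul_I_im]
    have hw1 : (↑a1 + ↑b1*e) = Complex.mk (a1+b1*Real.cos α) (b1*Real.sin α) := by
      rw [he']; apply Complex.ext <;> simp
    have hw2 : (↑a2 + ↑b2*e) = Complex.mk (a2+b2*Real.cos α) (b2*Real.sin α) := by
      rw [he']; apply Complex.ext <;> simp
    have hcd := cone_dist _ _ a1 b1 a2 b2 (Real.cos α) (Real.sin α)
      ha1 hb1 ha2 hb2 hcos hsc hw1 hw2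
    have huv : u - v = ((↑a1 + ↑b1*e) - (↑a2 + ↑b2*e)) * (x - p) := by
      have : u - v = (u - p) - (v - p) := by ring
      rw [this, hu, hv]; ring
    have hdu : dist p u = ‖(↑a1 + ↑b1*e)‖ * ‖(x - p)‖ := by
      rw [Complex.dist_eq, ← norm_neg, neg_sub, ← norm_mul, ← hu]
    have hdv : dist p v = ‖(↑a2 + ↑b2*e)‖ * ‖(x - p)‖ := by
      rw [Complex.dist_eq, ← norm_neg, neg_sub, ← norm_mul, ← hv]
    have : dist u v ≤ max (dist p u) (dist p v) := by
      rw [Complex.dist_eq, huv, norm_mul, hdu, hdv]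
      rw [← max_mul_of_nonneg _ _ (norm_nonneg (x-p))]
      exact mul_le_mul_of_nonneg_right hcd (norm_nonneg _)
    calc dist u v ≤ max (dist p u) (dist p v) := this
      _ ≤ dist p y₀ := max_le (hy₀ u huC) (hy₀ v hvC)
  · -- lower bound
    obtain ⟨j, a, b, ha, hb, heq⟩ := exists_rep α hα0 hαle ((y₀ - p)/(x - p))
    set y := (rot p α)^[j] y₀ with hy
    have hyC : y ∈ C := hmemiter j y₀ hy₀C
    have hyp : y - p = Complex.exp ((j*α : ℝ)*Complex.I) * (y₀ - p) := by
      rw [hy, hiter]; ring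
    have hysec : y ∈ sector p x k := by
      rw [hsec]
      refine ⟨a, b, ha, hb, ?_⟩
      rw [hyp]
      have : (y₀ - p) = ((y₀ - p)/(x - p)) * (x - p) := (div_mul_cancel₀ _ hxp).symm
      rw [this, ← mul_assoc, heq]
    have hdy : dist p y = dist p y₀ := by
      rw [Complex.dist_eq, Complex.dist_eq, ← norm_neg, neg_sub, hyp,
        norm_mul, Complex.norm_exp_ofReal_mul_I, one_mul,
        ← norm_neg, neg_sub]
    rw [← hdy]
    exact Metric.dist_le_diam_of_mem (hCc.isBounded.subset inter_subset_left)
      ⟨hpC, hpsec⟩ ⟨hyC, hysec⟩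
end

section
/- Let C be a planar convex body that is k-rotationally symmetric about a point p in its interior, for an integer k ≥ 4. Then R < √3 · r, where r = dist(p, ∂C) and R = sup_{y ∈ C} dist(p, y). -/
open Metric Set

/-- All iterated rotations of a point of `C` stay in `C`. -/
lemma rot_iter_mem (C : Set ℂ) (p : ℂ) (k : ℕ) (hsym : IsRotSym C p k)
    {y : ℂ} (hy : y ∈ C) (j : ℕ) :
    p + Complex.exp ((j * (2 * Real.pi / k) : ℝ) * Complex.I) * (y - p) ∈ C := by
  induction j with
  | zero => simpa using hy
  | succ n ih =>
    have hmem : rot p (2 * Real.pi / k)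
        (p + Complex.exp ((n * (2 * Real.pi / k) : ℝ) * Complex.I) * (y - p)) ∈ C := by
      rw [← hsym]; exact Set.mem_image_of_mem _ ih
    have he : Complex.exp ((((n : ℕ) + 1 : ℕ) * (2 * Real.pi / k) : ℝ) * Complex.I)
        = Complex.exp (((2 * Real.pi / k : ℝ) : ℂ) * Complex.I) *
          Complex.exp ((((n : ℕ) * (2 * Real.pi / k) : ℝ) : ℂ) * Complex.I) := by
      rw [← Complex.exp_add]
      congr 1
      push_cast
      ring
    simp only [rot] at hmem
    rw [he]
    convert hmem using 1
    ring

/-- Given any complex number `ζ`, some rotation of it by a multiple of `2π/k`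
has real part at least `cos (π/k) * |ζ|`. -/
lemma angle_lemma (k : ℕ) (hk : 4 ≤ k) (ζ : ℂ) :
    ∃ j : ℕ, Real.cos (Real.pi / k) * ‖ζ‖ ≤
      (ζ * Complex.exp ((j * (2 * Real.pi / k) : ℝ) * Complex.I)).re := by
  have hk0 : (0:ℝ) < k := by positivity
  set θ : ℝ := 2 * Real.pi / k with hθdef
  have hθ0 : 0 < θ := by
    have := Real.pi_pos
    positivity
  rcases eq_or_ne ζ 0 with rfl | hζ
  · exact ⟨0, by simp⟩
  set β : ℝ := ζ.arg with hβdef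
  set m : ℤ := round (-β / θ) with hmdef
  have hkz : (k : ℤ) ≠ 0 := by positivity
  set j : ℕ := (m % (k : ℤ)).toNat with hjdef
  have hjm : (j : ℤ) = m - (k : ℤ) * (m / (k : ℤ)) := by
    rw [hjdef, Int.toNat_of_nonneg (Int.emod_nonneg m hkz), Int.emod_def]
  have hkθ : (k : ℝ) * θ = 2 * Real.pi := by
    rw [hθdef]; field_simp
  -- cos (β + j θ) = cos (β + m θ)
  have hjθ : (j : ℝ) * θ = m * θ - (m / (k : ℤ) : ℤ) * (2 * Real.pi) := by
    have : ((j : ℤ) : ℝ) = (m : ℝ) - (k : ℝ) * ((m / (k : ℤ) : ℤ) : ℝ) := by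
      rw [hjm]; push_cast; ring
    push_cast at this ⊢
    rw [this, ← hkθ]
    ring
  have hcos_eq : Real.cos (β + j * θ) = Real.cos (β + m * θ) := by
    rw [hjθ, show β + ((m:ℝ) * θ - (m / (k : ℤ) : ℤ) * (2 * Real.pi))
        = (β + m * θ) - (m / (k : ℤ) : ℤ) * (2 * Real.pi) by ring,
      Real.cos_sub_int_mul_two_pi]
  -- |β + m θ| ≤ θ / 2
  have hround : |(-β / θ) - (m : ℝ)| ≤ 1 / 2 := abs_sub_round (-β / θ)
  have habs : |β + m * θ| ≤ θ / 2 := by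
    have hprod : θ * ((-β / θ) - (m : ℝ)) = -(β + m * θ) := by
      field_simp
      ring
    have h1 : |β + m * θ| = θ * |(-β / θ) - (m : ℝ)| := by
      calc |β + m * θ| = |θ * ((-β / θ) - (m : ℝ))| := by rw [hprod, abs_neg]
        _ = θ * |(-β / θ) - (m : ℝ)| := by rw [abs_mul, abs_of_pos hθ0]
    rw [h1]
    calc θ * |(-β / θ) - (m : ℝ)| ≤ θ * (1/2) := by
          exact mul_le_mul_of_nonneg_left hround hθ0.le
      _ = θ / 2 := by ring
  have hθhalf : θ / 2 = Real.pi / k := by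
    rw [hθdef]; ring
  have hθhalfpi : θ / 2 ≤ Real.pi := by
    rw [hθhalf]
    have h4 : (4:ℝ) ≤ k := by exact_mod_cast hk
    have := Real.pi_pos
    rw [div_le_iff₀ hk0]
    nlinarith
  have hcos_ge : Real.cos (Real.pi / k) ≤ Real.cos (β + m * θ) := by
    rw [← hθhalf, ← Real.cos_abs (β + m * θ)]
    exact Real.cos_le_cos_of_nonneg_of_le_pi (abs_nonneg _) hθhalfpi habs
  refine ⟨j, ?_⟩
  have hre : (ζ * Complex.exp ((j * θ : ℝ) * Complex.I)).re
      = ‖ζ‖ * Real.cos (β + j * θ) := by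
    conv_lhs => rw [← Complex.norm_mul_exp_arg_mul_I ζ]
    rw [mul_assoc, ← Complex.exp_add,
      show ((ζ.arg : ℂ) * Complex.I + ((j * θ : ℝ) : ℂ) * Complex.I)
        = ((ζ.arg + j * θ : ℝ) : ℂ) * Complex.I by push_cast; ring]
    rw [Complex.re_ofReal_mul, Complex.exp_ofReal_mul_I_re]
  rw [hre, hcos_eq]
  have := norm_nonneg ζ
  nlinarith [hcos_ge]

/-- Representation of a real-linear functional on `ℂ`. -/
lemma functional_rep (f : ℂ →L[ℝ] ℝ) (z : ℂ) :
    f z = ((starRingEnd ℂ) ((f 1 : ℝ) + (f Complex.I : ℝ) * Complex.I) * z).re := by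
  have hz : z = z.re • (1 : ℂ) + z.im • Complex.I := by
    simp [Complex.real_smul, Complex.re_add_im]
  conv_lhs => rw [hz]
  rw [map_add, map_smul, map_smul]
  simp [Complex.mul_re, Complex.conj_re, Complex.conj_im]
  ring

/-- Key estimate: `cos (π/k) * dist p y ≤ dist p q` for `y ∈ C`, `q ∈ frontier C`. -/
lemma key_estimate (C : Set ℂ) (p : ℂ) (k : ℕ) (hC : IsConvexBody C) (hk : 4 ≤ k)
    (hsym : IsRotSym C p k) (hp : p ∈ interior C)
    {y q : ℂ} (hy : y ∈ C) (hq : q ∈ frontier C) :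
    Real.cos (Real.pi / k) * dist p y ≤ dist p q := by
  obtain ⟨hcomp, hconv, hint⟩ := hC
  have hqni : q ∉ interior C := hq.2
  obtain ⟨f, hf⟩ := geometric_hahn_banach_open_point hconv.interior isOpen_interior hqni
  -- f a ≤ f q for all a ∈ C
  have hfC : ∀ a ∈ C, f a ≤ f q := by
    intro a ha
    have hcont : Continuous fun t : ℝ => f ((1 - t) • p + t • a) := by fun_prop
    have htend : Filter.Tendsto (fun t : ℝ => f ((1 - t) • p + t • a))
        (nhdsWithin 1 (Set.Iio 1)) (nhds (f a)) := by
      have := hcont.tendsto 1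
      simp only [sub_self, zero_smul, one_smul, zero_add] at this
      exact this.mono_left nhdsWithin_le_nhds
    refine le_of_tendsto htend ?_
    filter_upwards [Ico_mem_nhdsLT_of_mem (by norm_num : (1:ℝ) ∈ Set.Ioc (0:ℝ) 1)] with t ht
    have hmem : (1 - t) • p + t • a ∈ interior C := by
      apply hconv.combo_interior_closure_mem_interior hp (subset_closure ha)
        (by linarith [ht.2]) ht.1 (by ring)
    exact (hf _ hmem).le
  set n : ℂ := ((f 1 : ℝ) : ℂ) + ((f Complex.I : ℝ) : ℂ) * Complex.I with hn
  have hrep : ∀ z, f z = ((starRingEnd ℂ) n * z).re := fun z => functional_rep f z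
  have hfpq : f p < f q := hf p hp
  have hnpos : 0 < ‖n‖ := by
    rw [norm_pos_iff]
    intro h0
    rw [hrep p, hrep q, h0] at hfpq
    simp at hfpq
  set θ : ℝ := 2 * Real.pi / k with hθ
  obtain ⟨j, hj⟩ := angle_lemma k hk ((starRingEnd ℂ) n * (y - p))
  have hyjC : p + Complex.exp ((j * θ : ℝ) * Complex.I) * (y - p) ∈ C :=
    rot_iter_mem C p k hsym hy j
  have habs : ‖(starRingEnd ℂ) n * (y - p)‖ = ‖n‖ * dist p y := by
    rw [norm_mul, Complex.norm_conj, dist_comm, Complex.dist_eq]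
  have hre1 : ((starRingEnd ℂ) n * (y - p) * Complex.exp ((j * θ : ℝ) * Complex.I)).re
      = f (p + Complex.exp ((j * θ : ℝ) * Complex.I) * (y - p)) - f p := by
    rw [hrep _, hrep p, ← Complex.sub_re]
    congr 1
    ring
  have hchain : Real.cos (Real.pi / k) * (‖n‖ * dist p y)
      ≤ ‖n‖ * dist p q := by
    calc Real.cos (Real.pi / k) * (‖n‖ * dist p y)
        = Real.cos (Real.pi / k) * ‖(starRingEnd ℂ) n * (y - p)‖ := by
          rw [habs]
      _ ≤ ((starRingEnd ℂ) n * (y - p) * Complex.exp ((j * θ : ℝ) * Complex.I)).re := hj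
      _ = f (p + Complex.exp ((j * θ : ℝ) * Complex.I) * (y - p)) - f p := hre1
      _ ≤ f q - f p := by linarith [hfC _ hyjC]
      _ = ((starRingEnd ℂ) n * (q - p)).re := by
          rw [hrep q, hrep p, ← Complex.sub_re, ← mul_sub]
      _ ≤ ‖(starRingEnd ℂ) n * (q - p)‖ := Complex.re_le_norm _
      _ = ‖n‖ * dist p q := by
          rw [norm_mul, Complex.norm_conj, dist_comm, Complex.dist_eq]
  have h := hchain
  rw [show Real.cos (Real.pi / k) * (‖n‖ * dist p y)
      = ‖n‖ * (Real.cos (Real.pi / k) * dist p y) by ring] at h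
  exact le_of_mul_le_mul_left h hnpos

/-- For a `k`-rotationally symmetric planar convex body with `k ≥ 4`,
the circumradius and inradius (with respect to the center `p`)
satisfy `R < √3 · r`. -/
theorem stmt_8 (C : Set ℂ) (p : ℂ) (k : ℕ) (hC : IsConvexBody C)
    (hk : 4 ≤ k) (hsym : IsRotSym C p k) (hp : p ∈ interior C) :
    circumrad C p < Real.sqrt 3 * infDist p (frontier C) := by
  obtain ⟨hcomp, hconv, hint⟩ := hC
  have hCne : C.Nonempty := hint.mono interior_subset
  have hfr : (frontier C).Nonempty := by
    by_contra h
    rw [Set.not_nonempty_iff_eq_empty] at h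
    have hcl : IsClopen C := isClopen_iff_frontier_eq_empty.mpr h
    rcases isClopen_iff.mp hcl with h1 | h1
    · exact hCne.ne_empty h1
    · exact NoncompactSpace.noncompact_univ (X := ℂ) (h1 ▸ hcomp)
  set r := infDist p (frontier C) with hr
  have hr0 : 0 < r := by
    have hpn : p ∉ frontier C := fun h => h.2 hp
    exact (IsClosed.notMem_iff_infDist_pos isClosed_frontier hfr).mp hpn
  have hcos : Real.sqrt 2 / 2 ≤ Real.cos (Real.pi / k) := by
    rw [← Real.cos_pi_div_four]
    have hk0 : (0:ℝ) < k := by positivity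
    have h4 : (4:ℝ) ≤ k := by exact_mod_cast hk
    have hpi := Real.pi_pos
    apply Real.cos_le_cos_of_nonneg_of_le_pi (by positivity) (by linarith)
    rw [div_le_div_iff₀ hk0 (by norm_num)]
    nlinarith
  have hkey : ∀ y ∈ C, dist p y ≤ Real.sqrt 2 * r := by
    intro y hy
    have h1 : Real.cos (Real.pi / k) * dist p y ≤ r := by
      by_contra hcon
      push_neg at hcon
      obtain ⟨q, hq, hdq⟩ := (infDist_lt_iff hfr).mp hcon
      exact absurd (key_estimate C p k ⟨hcomp, hconv, hint⟩ hk hsym hp hy hq)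
        (not_le.mpr hdq)
    have hd0 : 0 ≤ dist p y := dist_nonneg
    have hs2 : Real.sqrt 2 * Real.sqrt 2 = 2 := Real.mul_self_sqrt (by norm_num)
    have hs2n : 0 ≤ Real.sqrt 2 := Real.sqrt_nonneg 2
    have h2 : Real.sqrt 2 / 2 * dist p y ≤ r :=
      le_trans (mul_le_mul_of_nonneg_right hcos hd0) h1
    nlinarith [mul_le_mul_of_nonneg_left h2 hs2n]
  have hcirc : circumrad C p ≤ Real.sqrt 2 * r := by
    rw [circumrad]
    apply Real.iSup_le _ (by positivity)
    intro y
    apply Real.iSup_le _ (by positivity)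
    intro hy
    exact hkey y hy
  calc circumrad C p ≤ Real.sqrt 2 * r := hcirc
    _ < Real.sqrt 3 * r := by
        apply mul_lt_mul_of_pos_right _ hr0
        exact Real.sqrt_lt_sqrt (by norm_num) (by norm_num)
end

section
/- Let C be a planar convex body that is k_C-rotationally symmetric about a point p in its interior, where k_C is a composite integer whose smallest divisor greater than 1 equals 5 (so C is multi-rotationally symmetric with minimal degree 5). Then d_M(P_5) ≠ R, i.e. diam(C ∩ S_5) ≠ R; equivalently, R < 2 r sin(π/5). -/
open Metric Set

lemma stmt9_ball_sub {C : Set ℂ} {p : ℂ} (hp : p ∈ interior C) :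
    ball p (infDist p (frontier C)) ⊆ interior C := by
  set r := infDist p (frontier C) with hr
  rcases le_or_gt r 0 with h0 | h0
  · simp [Metric.ball_eq_empty.2 h0]
  have hsub : ball p r ⊆ interior C ∪ interior Cᶜ := by
    intro z hz
    have hzf : z ∉ frontier C := by
      intro hzf
      have h1 : infDist p (frontier C) ≤ dist p z := infDist_le_dist_of_mem hzf
      have h2 : dist p z < r := by rwa [mem_ball, dist_comm] at hz
      linarith
    by_cases hzc : z ∈ closure C
    · refine Or.inl ?_
      rw [frontier, Set.mem_diff] at hzf
      push_neg at hzf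
      exact hzf hzc
    · exact Or.inr (by rwa [interior_compl, mem_compl_iff])
  refine (convex_ball p r).isPreconnected.subset_left_of_subset_union
    isOpen_interior isOpen_interior ?_ hsub ⟨p, mem_ball_self h0, hp⟩
  rw [interior_compl]
  exact disjoint_compl_right.mono_left interior_subset_closure

set_option maxHeartbeats 1000000 in
lemma stmt9_support {C : Set ℂ} (hconv : Convex ℝ C) (hcl : IsClosed C) {p x : ℂ}
    (hp : p ∈ interior C) (hx : x ∈ frontier C)
    (hxr : dist p x = infDist p (frontier C)) {z : ℂ} (hz : z ∈ C) :
    ((starRingEnd ℂ) (x - p) * (z - p)).re ≤ dist p x ^ 2 := by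
  by_contra hcon
  push_neg at hcon
  set r : ℝ := dist p x with hr
  have hxint : x ∉ interior C := hx.2
  have hrpos : 0 < r := dist_pos.2 (fun h => hxint (h ▸ hp))
  set v : ℂ := x - p with hv
  have habs : ‖v‖ = r := by
    rw [hv, hr, dist_comm p x, Complex.dist_eq]
  set c : ℝ := ((starRingEnd ℂ) v * (z - p)).re / r with hcdef
  set s : ℝ := ((starRingEnd ℂ) v * (z - p)).im / r with hsdef
  have hcr : r < c := by
    rw [hcdef, lt_div_iff₀ hrpos]
    nlinarith [hcon]
  have hvv : v * (starRingEnd ℂ) v = ((r^2 : ℝ) : ℂ) := by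
    rw [Complex.mul_conj, Complex.normSq_eq_norm_sq, habs]
  have h1 : (starRingEnd ℂ) v * (z - p) = ((r*c : ℝ):ℂ) + ((r*s:ℝ):ℂ) * Complex.I := by
    apply Complex.ext
    · simp [hcdef]
      field_simp
    · simp [hsdef]
      field_simp
  have hdecomp : ((r:ℂ))^2 * (z - p) = v * (((r*c:ℝ):ℂ) + ((r*s:ℝ):ℂ)*Complex.I) := by
    rw [← h1, ← mul_assoc, hvv]
    push_cast
    ring
  push_cast at hdecomp
  clear_value c s
  -- choose t
  have hε : 0 < c - r := sub_pos.2 hcr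
  set D : ℝ := s^2 + c^2 - r^2 with hD
  have hDpos : 0 < D := by nlinarith
  set t : ℝ := min (1/2) (min (r/(2*|s|+1)) (r*(c-r)/D)) with ht
  have habs0 : (0:ℝ) ≤ |s| := abs_nonneg s
  have ht0 : 0 < t := by
    refine lt_min (by norm_num) (lt_min ?_ ?_)
    · positivity
    · exact div_pos (mul_pos hrpos hε) hDpos
  have ht2 : t ≤ 1/2 := min_le_left _ _
  have h1t : (0:ℝ) < 1 - t := by linarith
  have hts : t * |s| ≤ r/2 := by
    have h3 : t ≤ r/(2*|s|+1) := le_trans (min_le_right _ _) (min_le_left _ _)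
    have h4 : t * |s| ≤ (r/(2*|s|+1)) * |s| := mul_le_mul_of_nonneg_right h3 habs0
    have h5 : (r/(2*|s|+1)) * |s| ≤ r/2 := by
      rw [div_mul_eq_mul_div, div_le_div_iff₀ (by positivity) (by norm_num)]
      nlinarith
    linarith
  have htD : t * D ≤ r * (c - r) := by
    have h3 : t ≤ r*(c-r)/D := le_trans (min_le_right _ _) (min_le_right _ _)
    rw [le_div_iff₀ hDpos] at h3
    exact h3
  set b : ℝ := -(t*s)/(1-t) with hb
  have hbb : b * (1-t) = -(t*s) := by
    rw [hb]; field_simp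
  clear_value t
  have hb2 : b^2 ≤ r^2 := by
    have h6 : (t*|s|)^2 ≤ (r/2)^2 := by
      apply sq_le_sq' <;> nlinarith [mul_nonneg ht0.le habs0]
    have h7 : (t*s)^2 ≤ (r/2)^2 := by rw [mul_pow] at h6 ⊢; rwa [sq_abs] at h6
    have h8 : b^2 * (1-t)^2 = (t*s)^2 := by rw [← mul_pow, hbb]; ring
    have h9 : (1:ℝ)/4 ≤ (1-t)^2 := by nlinarith
    nlinarith [mul_le_mul_of_nonneg_left h9 (sq_nonneg b)]
  clear_value b
  set a : ℝ := Real.sqrt (r^2 - b^2) with ha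
  have ha0 : 0 ≤ a := Real.sqrt_nonneg _
  have ha2 : a^2 = r^2 - b^2 := Real.sq_sqrt (by linarith)
  clear_value a
  -- the ball point
  set wpt : ℂ := p + v * (((a:ℝ):ℂ) + ((b:ℝ):ℂ) * Complex.I) / (r:ℂ) with hwpt
  have hrC : ((r:ℝ):ℂ) ≠ 0 := by exact_mod_cast hrpos.ne'
  have hwp : (r:ℂ) * (wpt - p) = v * (((a:ℝ):ℂ) + ((b:ℝ):ℂ) * Complex.I) := by
    rw [hwpt]; field_simp; ring
  have hball : ball p r ⊆ interior C := by rw [hxr]; exact stmt9_ball_sub hp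
  have hclosedball : closedBall p r ⊆ C := by
    rw [← closure_ball p hrpos.ne']
    calc closure (ball p r) ⊆ closure C := closure_mono (hball.trans interior_subset)
    _ = C := hcl.closure_eq
  have hwC : wpt ∈ C := by
    apply hclosedball
    rw [mem_closedBall, Complex.dist_eq]
    have he : wpt - p = v * (((a:ℝ):ℂ) + ((b:ℝ):ℂ) * Complex.I) / (r:ℂ) := by
      rw [hwpt]; ring
    rw [he, norm_div, norm_mul, habs, Complex.norm_real, Real.norm_eq_abs, abs_of_pos hrpos,
      Complex.norm_add_mul_I]
    rw [mul_comm, mul_div_assoc, div_self hrpos.ne', mul_one]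
    rw [show a^2 + b^2 = r^2 by linarith]
    rw [Real.sqrt_sq hrpos.le]
  -- the far point
  have hb'' : ((b:ℝ):ℂ) * (1 - ((t:ℝ):ℂ)) = -(((t:ℝ):ℂ)*((s:ℝ):ℂ)) := by
    have := congrArg (fun y : ℝ => (y:ℂ)) hbb
    push_cast at this
    linear_combination this
  have hq_eq' : ((r:ℂ))^2 * ((((1-t):ℝ) • wpt + ((t:ℝ)) • z) - p)
      = ((((1-t)*a + t*c : ℝ)):ℂ) * v * (r:ℂ) := by
    rw [Complex.real_smul, Complex.real_smul]
    push_cast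
    linear_combination ((r:ℂ)*(1-((t:ℝ):ℂ))) * hwp + ((t:ℝ):ℂ) * hdecomp
      + v*(r:ℂ)*Complex.I*hb''
  set lam : ℝ := (1-t)*a + t*c with hlam
  have hlamr : r < lam := by
    rcases le_or_gt (t*c) r with htc | htc
    · have hsq : (r - t*c)^2 < ((1-t)*a)^2 := by
        have e0 : (b*(1-t))^2 = (t*s)^2 := by rw [hbb]; ring
        have e1 : ((1-t)*a)^2 = (1-t)^2*r^2 - t^2*s^2 := by nlinarith [ha2, e0]
        nlinarith [mul_pos ht0 (mul_pos hrpos hε)]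
      nlinarith [mul_nonneg h1t.le ha0, sq_nonneg ((1-t)*a + (r - t*c))]
    · nlinarith [mul_nonneg h1t.le ha0]
  have hlampos : 0 < lam := lt_trans hrpos hlamr
  have hlamC : ((lam:ℝ):ℂ) ≠ 0 := by exact_mod_cast hlampos.ne'
  have hcomb := hconv hwC hz h1t.le ht0.le (by ring : (1-t) + t = 1)
  have h3 : (((1-t):ℝ) • wpt + ((t:ℝ)) • z) - p = ((lam:ℝ):ℂ) * v / (r:ℂ) := by
    apply mul_left_cancel₀ (pow_ne_zero 2 hrC)
    rw [hq_eq', hlam]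
    push_cast
    field_simp
  have hqC : p + ((lam:ℝ):ℂ) * v / (r:ℂ) ∈ C := by
    have h4 : p + ((lam:ℝ):ℂ) * v / (r:ℂ) = (((1-t):ℝ) • wpt + ((t:ℝ)) • z) := by
      rw [← h3]; ring
    rw [h4]; exact hcomb
  -- x in open segment p q
  have haux : ((r/lam : ℝ):ℂ) * (((lam:ℝ):ℂ) * v / (r:ℂ)) = v := by
    push_cast
    field_simp
  have hxseg : x ∈ openSegment ℝ p (p + ((lam:ℝ):ℂ) * v / (r:ℂ)) := by
    refine ⟨1 - r/lam, r/lam, ?_, ?_, by ring, ?_⟩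
    · have : r/lam < 1 := (div_lt_one hlampos).2 hlamr
      linarith
    · positivity
    · rw [Complex.real_smul, Complex.real_smul, mul_add, haux]
      push_cast
      rw [hv]
      ring
  have : x ∈ interior C :=
    hconv.openSegment_interior_closure_subset_interior hp (subset_closure hqC) hxseg
  exact hxint this

lemma stmt9_rot_mem {C : Set ℂ} {p : ℂ} {k : ℕ} (hk : k ≠ 0) (hsym : IsRotSym C p k)
    {y : ℂ} (hy : y ∈ C) (m : ℤ) :
    p + Complex.exp (((m * (2 * Real.pi / k) : ℝ)) * Complex.I) * (y - p) ∈ C := by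
  have hknz : (k:ℤ) ≠ 0 := by exact_mod_cast hk
  have hnat : ∀ n : ℕ, p + Complex.exp (((n * (2 * Real.pi / k) : ℝ)) * Complex.I) * (y - p) ∈ C := by
    intro n
    induction n with
    | zero => simpa using hy
    | succ n ih =>
      have hmem : rot p (2 * Real.pi / k)
          (p + Complex.exp (((n * (2 * Real.pi / k) : ℝ)) * Complex.I) * (y - p)) ∈ C := by
        rw [← hsym]
        exact Set.mem_image_of_mem _ ih
      have heq : rot p (2 * Real.pi / k)
          (p + Complex.exp (((n * (2 * Real.pi / k) : ℝ)) * Complex.I) * (y - p))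
          = p + Complex.exp ((((n+1 : ℕ) * (2 * Real.pi / k) : ℝ)) * Complex.I) * (y - p) := by
        simp only [rot, add_sub_cancel_left]
        rw [← mul_assoc, ← Complex.exp_add]
        congr 1
        push_cast
        ring
      rw [heq] at hmem
      exact hmem
  have hn : (((m % (k:ℤ)).toNat : ℤ)) = m % k := Int.toNat_of_nonneg (Int.emod_nonneg m hknz)
  have h2' : m = (k:ℤ) * (m / k) + (((m % (k:ℤ)).toNat : ℕ) : ℤ) := by
    rw [hn]; exact (Int.mul_ediv_add_emod m k).symm
  have hczC : ((m:ℂ)) = ((k:ℕ):ℂ) * (((m / (k:ℤ)) : ℤ):ℂ) + ((((m % (k:ℤ)).toNat : ℕ)):ℂ) := by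
    exact_mod_cast congrArg (fun j : ℤ => (j:ℂ)) h2'
  have hkC : ((k:ℕ):ℂ) ≠ 0 := by exact_mod_cast hk
  have hexp : Complex.exp (((m * (2 * Real.pi / k) : ℝ)) * Complex.I)
      = Complex.exp (((((m % (k:ℤ)).toNat : ℕ) * (2 * Real.pi / k) : ℝ)) * Complex.I) := by
    rw [Complex.exp_eq_exp_iff_exists_int]
    refine ⟨m / k, ?_⟩
    push_cast
    field_simp
    linear_combination hczC
  rw [hexp]
  exact hnat _

lemma stmt9_exists_rot_re {θ : ℝ} (hθ0 : 0 < θ) (hθ : θ ≤ Real.pi) (u : ℂ) :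
    ∃ m : ℤ, ‖u‖ * Real.cos θ ≤ (Complex.exp (((m * θ : ℝ)) * Complex.I) * u).re := by
  rcases eq_or_ne u 0 with rfl | hu
  · exact ⟨0, by simp⟩
  set φ := Complex.arg u with hφ
  refine ⟨⌈-φ/θ⌉, ?_⟩
  have hc1 : (-φ/θ : ℝ) ≤ ⌈-φ/θ⌉ := Int.le_ceil _
  have hc2 : (⌈-φ/θ⌉ : ℝ) < -φ/θ + 1 := Int.ceil_lt_add_one _
  have h1 : 0 ≤ (⌈-φ/θ⌉ : ℝ) * θ + φ := by
    rw [div_le_iff₀ hθ0] at hc1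
    nlinarith
  have h2 : (⌈-φ/θ⌉ : ℝ) * θ + φ ≤ θ := by
    have h := mul_lt_mul_of_pos_right (show (⌈-φ/θ⌉ : ℝ) < -φ/θ + 1 from hc2) hθ0
    rw [add_mul, div_mul_cancel₀ _ hθ0.ne'] at h
    nlinarith
  have hexp : Complex.exp (((⌈-φ/θ⌉ * θ : ℝ)) * Complex.I) * u
      = (‖u‖ : ℂ) * Complex.exp ((((⌈-φ/θ⌉ : ℝ) * θ + φ : ℝ)) * Complex.I) := by
    conv_lhs => rw [← Complex.norm_mul_exp_arg_mul_I u]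
    rw [← hφ, mul_left_comm, ← Complex.exp_add]
    congr 2
    push_cast
    ring
  rw [hexp, Complex.re_ofReal_mul, Complex.exp_ofReal_mul_I_re]
  have hcos : Real.cos θ ≤ Real.cos ((⌈-φ/θ⌉ : ℝ) * θ + φ) :=
    Real.cos_le_cos_of_nonneg_of_le_pi h1 hθ h2
  exact mul_le_mul_of_nonneg_left hcos (norm_nonneg u)

set_option maxHeartbeats 1000000 in
/-- For a multi-rotationally symmetric planar convex body whose minimal degree
(the smallest divisor of the composite maximal degree `k_C` greater than 1)
equals `5`, one has `d_M(P_5) ≠ R`; equivalently `R < 2 r sin(π/5)`. -/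
theorem stmt_9 (C : Set ℂ) (p x : ℂ) (kC : ℕ) (hC : IsConvexBody C)
    (hk2 : 2 ≤ kC) (hcomp : ¬ kC.Prime) (hmin : kC.minFac = 5)
    (hsym : IsRotSym C p kC) (hp : p ∈ interior C)
    (hx : x ∈ frontier C) (hxr : dist p x = infDist p (frontier C)) :
    dM C p x 5 ≠ circumrad C p ∧
      circumrad C p < 2 * infDist p (frontier C) * Real.sin (Real.pi / 5) := by
  obtain ⟨hcomp', hconv, hint⟩ := hC
  have hcl : IsClosed C := hcomp'.isClosed
  have hxint : x ∉ interior C := hx.2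
  have hrpos : 0 < dist p x := dist_pos.2 (fun h => hxint (h ▸ hp))
  set r : ℝ := infDist p (frontier C) with hrdef
  have hrx : dist p x = r := hxr
  have hr0 : 0 < r := hrx ▸ hrpos
  have hk5 : (5 : ℕ) ∣ kC := hmin ▸ Nat.minFac_dvd kC
  have hk25 : 25 ≤ kC := by
    have h := Nat.minFac_sq_le_self (by omega) hcomp
    rw [hmin] at h
    nlinarith
  have hk0 : kC ≠ 0 := by omega
  have hkR : (25 : ℝ) ≤ (kC : ℝ) := by exact_mod_cast hk25
  have hkpos : (0:ℝ) < (kC:ℝ) := by linarith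
  have hpi1 : (3.141592 : ℝ) < Real.pi := Real.pi_gt_d6
  have hpi2 : Real.pi < 3.141593 := Real.pi_lt_d6
  set θ : ℝ := 2 * Real.pi / kC with hθdef
  have hθ0 : 0 < θ := by positivity
  have hθsmall : θ ≤ 0.2514 := by
    rw [hθdef, div_le_iff₀ hkpos]
    nlinarith
  have hθpi : θ ≤ Real.pi := by linarith
  have hcosθ : (0.9683 : ℝ) ≤ Real.cos θ := by
    have h := Real.one_sub_sq_div_two_le_cos (x := θ)
    nlinarith [hθ0.le]
  -- bound on dist p y for y ∈ C
  have hbound : ∀ y ∈ C, dist p y ≤ 1.04 * r := by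
    intro y hy
    obtain ⟨m, hm⟩ := stmt9_exists_rot_re hθ0 hθpi ((starRingEnd ℂ) (x - p) * (y - p))
    have hmem := stmt9_rot_mem hk0 hsym hy m
    have hsupp := stmt9_support hconv hcl hp hx hxr hmem
    have he : (starRingEnd ℂ) (x - p) * ((p + Complex.exp (((m * θ : ℝ)) * Complex.I) * (y - p)) - p)
        = Complex.exp (((m * θ : ℝ)) * Complex.I) * ((starRingEnd ℂ) (x - p) * (y - p)) := by
      ring
    rw [he] at hsupp
    have habs : ‖(starRingEnd ℂ) (x - p) * (y - p)‖ = (dist p x) * dist p y := by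
      rw [norm_mul, Complex.norm_conj]
      rw [dist_comm p x, dist_comm p y, Complex.dist_eq, Complex.dist_eq]
    have hkey : (dist p x) * dist p y * Real.cos θ ≤ (dist p x)^2 := by
      calc (dist p x) * dist p y * Real.cos θ
          = ‖(starRingEnd ℂ) (x - p) * (y - p)‖ * Real.cos θ := by rw [habs]
        _ ≤ _ := le_trans hm hsupp
    rw [hrx] at hkey
    have h1 : dist p y * Real.cos θ ≤ r := by
      have h2 : r * (dist p y * Real.cos θ) ≤ r * r := by nlinarith [hkey]
      exact le_of_mul_le_mul_left h2 hr0
    have h3 : dist p y * 0.9683 ≤ dist p y * Real.cos θ :=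
      mul_le_mul_of_nonneg_left hcosθ dist_nonneg
    nlinarith [dist_nonneg (x := p) (y := y)]
  have hRle : circumrad C p ≤ 1.04 * r := by
    refine Real.iSup_le (fun y => Real.iSup_le (fun hy => hbound y hy) (by positivity)) (by positivity)
  have hsin : (0.566 : ℝ) < Real.sin (Real.pi / 5) := by
    have h := Real.sin_gt_sub_cube (x := Real.pi/5) (by positivity)
    have hx1 : Real.pi/5 < 0.62832 := by linarith
    have hx0 : (0:ℝ) < Real.pi/5 := by positivity
    have h2 : (Real.pi/5)^2 ≤ 0.39479 := by nlinarith
    have h3 : (Real.pi/5)^3 ≤ 0.39479 * 0.62832 := by nlinarith [pow_pos hx0 2, sq_nonneg (Real.pi/5)]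
    linarith
  have hR : circumrad C p < 2 * r * Real.sin (Real.pi / 5) := by nlinarith
  -- the dM part
  have hxC : x ∈ C := by
    have := hx.1
    rwa [hcl.closure_eq] at this
  have hang : (((kC/5 : ℕ) : ℝ)) * (2 * Real.pi / kC) = 2 * Real.pi / 5 := by
    obtain ⟨j, rfl⟩ := hk5
    have hj : j ≠ 0 := by omega
    rw [Nat.mul_div_cancel_left j (by norm_num)]
    have hjR : (j:ℝ) ≠ 0 := by exact_mod_cast hj
    push_cast
    field_simp
  have hx5C : rot p (2 * Real.pi / ((5:ℕ):ℝ)) x ∈ C := by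
    have hmem := stmt9_rot_mem hk0 hsym hxC ((kC/5 : ℕ) : ℤ)
    have hcast : ((((kC/5 : ℕ) : ℤ)) * (2 * Real.pi / kC) : ℝ) = 2 * Real.pi / ((5:ℕ):ℝ) := by
      rw [Int.cast_natCast, hang]
      norm_num
    rw [hcast] at hmem
    exact hmem
  have hx_sect : x ∈ sector p x 5 := by
    refine ⟨1, 0, zero_le_one, le_refl 0, ?_⟩
    push_cast
    ring
  have hx5_sect : rot p (2 * Real.pi / ((5:ℕ):ℝ)) x ∈ sector p x 5 := by
    refine ⟨0, 1, le_refl 0, zero_le_one, ?_⟩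
    push_cast
    ring
  have hsin5 : (0:ℝ) ≤ Real.sin (Real.pi / 5) := by positivity
  have hdist5 : dist x (rot p (2 * Real.pi / ((5:ℕ):ℝ)) x) = 2 * (dist p x) * Real.sin (Real.pi/5) := by
    have he : x - rot p (2 * Real.pi / ((5:ℕ):ℝ)) x
        = (1 - Complex.exp (((2 * Real.pi / 5 : ℝ)) * Complex.I)) * (x - p) := by
      simp only [rot]
      push_cast
      ring
    rw [Complex.dist_eq, he, norm_mul]
    have habs1 : ‖1 - Complex.exp (((2 * Real.pi / 5 : ℝ)) * Complex.I)‖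
        = 2 * Real.sin (Real.pi/5) := by
      rw [Complex.norm_def, Complex.normSq_apply]
      simp only [Complex.sub_re, Complex.sub_im, Complex.one_re, Complex.one_im,
        Complex.exp_ofReal_mul_I_re, Complex.exp_ofReal_mul_I_im]
      have hc2 : Real.cos (2 * (Real.pi/5)) = 2 * Real.cos (Real.pi/5)^2 - 1 :=
        Real.cos_two_mul _
      have hsc : Real.sin (Real.pi/5)^2 + Real.cos (Real.pi/5)^2 = 1 :=
        Real.sin_sq_add_cos_sq _
      have hsc2 : Real.sin (2*(Real.pi/5))^2 + Real.cos (2*(Real.pi/5))^2 = 1 :=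
        Real.sin_sq_add_cos_sq _
      have h25 : (2 * Real.pi / 5 : ℝ) = 2 * (Real.pi/5) := by ring
      rw [h25]
      rw [show (1 - Real.cos (2*(Real.pi/5))) * (1 - Real.cos (2*(Real.pi/5)))
            + (0 - Real.sin (2*(Real.pi/5))) * (0 - Real.sin (2*(Real.pi/5)))
          = (2 * Real.sin (Real.pi/5))^2 by nlinarith]
      exact Real.sqrt_sq (by positivity)
    rw [habs1]
    rw [dist_comm p x, Complex.dist_eq]
    ring
  have hbdd : Bornology.IsBounded (C ∩ sector p x 5) :=
    hcomp'.isBounded.subset inter_subset_left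
  have hdiam := Metric.dist_le_diam_of_mem hbdd ⟨hxC, hx_sect⟩ ⟨hx5C, hx5_sect⟩
  rw [hdist5, hrx] at hdiam
  have hdM : 2 * r * Real.sin (Real.pi/5) ≤ dM C p x 5 := hdiam
  exact ⟨fun h => absurd hR (by rw [← h]; linarith), hR⟩
end

section
/- Let C be a planar convex body that is k-rotationally symmetric about a point p in its interior, for an integer k ≥ 6. Then R < 2 sin(π/5) · r = √((5 − √5)/2) · r, where r = dist(p, ∂C) and R = sup_{y ∈ C} dist(p, y). -/
open Metric Set

lemma exists_cos_near (k : ℕ) (hk : 0 < k) (ψ : ℝ) :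
    ∃ N : ℤ, Real.cos (Real.pi / k) ≤ Real.cos (2 * Real.pi * N / k + ψ) := by
  have hπ := Real.pi_pos
  have hk' : (0:ℝ) < k := by exact_mod_cast hk
  set x : ℝ := ψ * k / (2 * Real.pi) with hx
  refine ⟨-round x, ?_⟩
  have h1 : |x - round x| ≤ 1/2 := abs_sub_round x
  have hψ : ψ = 2 * Real.pi * x / k := by
    rw [hx]; field_simp
  have hrw : 2 * Real.pi * ((-round x : ℤ) : ℝ) / k + ψ
      = (2 * Real.pi / k) * (x - round x) := by
    rw [hψ]; push_cast; field_simp; ring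
  have habs : |2 * Real.pi * ((-round x : ℤ) : ℝ) / k + ψ| ≤ Real.pi / k := by
    rw [hrw, abs_mul, abs_of_pos (by positivity : (0:ℝ) < 2 * Real.pi / k)]
    calc 2 * Real.pi / k * |x - round x| ≤ 2 * Real.pi / k * (1/2) := by
          exact mul_le_mul_of_nonneg_left h1 (by positivity)
      _ = Real.pi / k := by ring
  have hple : Real.pi / k ≤ Real.pi := by
    apply div_le_self hπ.le
    exact_mod_cast hk
  calc Real.cos (Real.pi / k)
      ≤ Real.cos |2 * Real.pi * ((-round x : ℤ) : ℝ) / k + ψ| :=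
        Real.cos_le_cos_of_nonneg_of_le_pi (abs_nonneg _) hple habs
    _ = Real.cos (2 * Real.pi * ((-round x : ℤ) : ℝ) / k + ψ) := Real.cos_abs _

lemma key_s10 (C : Set ℂ) (p : ℂ) (k : ℕ) (hC : IsConvexBody C) (hk : 6 ≤ k)
    (hsym : IsRotSym C p k) (hp : p ∈ interior C) :
    0 < infDist p (frontier C) ∧
    ∀ y ∈ C, dist p y * Real.cos (Real.pi / k) ≤ infDist p (frontier C) := by
  obtain ⟨hcomp, hconv, hint⟩ := hC
  have hCc : IsClosed C := hcomp.isClosed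
  have hCuniv : C ≠ univ := hcomp.ne_univ
  obtain ⟨q, hqf, hqd⟩ :=
    exists_mem_frontier_infDist_compl_eq_dist (interior_subset hp) hCuniv
  set r := infDist p (frontier C) with hrdef
  have hfr_sub : frontier C ⊆ closure Cᶜ := by
    rw [frontier_eq_closure_inter_closure]; exact inter_subset_right
  have hle1 : infDist p Cᶜ ≤ r := by
    rw [← Metric.infDist_closure]
    exact Metric.infDist_le_infDist_of_subset hfr_sub ⟨q, hqf⟩
  have hr_eq : r = dist p q :=
    le_antisymm (Metric.infDist_le_dist_of_mem hqf) (by rw [← hqd]; exact hle1)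
  have hCcne : Cᶜ.Nonempty := Set.nonempty_compl.mpr hCuniv
  have hrpos : 0 < r := by
    rw [hr_eq, ← hqd, ← Metric.infDist_closure]
    rw [← (isClosed_closure (s := Cᶜ)).notMem_iff_infDist_pos
      (Set.Nonempty.closure hCcne)]
    rw [closure_compl]
    simpa using hp
  have hball : closedBall p r ⊆ C := by
    have h1 : ball p r ⊆ C := by
      rw [hr_eq, ← hqd]; exact Metric.ball_infDist_compl_subset
    rw [← closure_ball p hrpos.ne']
    calc closure (ball p r) ⊆ closure C := closure_mono h1
      _ = C := hCc.closure_eq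
  have hqni : q ∉ interior C := by
    have h2 : q ∈ closure Cᶜ := hfr_sub hqf
    rw [closure_compl] at h2
    exact h2
  obtain ⟨f, hf⟩ :=
    geometric_hahn_banach_open_point hconv.interior isOpen_interior hqni
  have hfC : ∀ z ∈ C, f z ≤ f q := by
    intro z hz
    obtain ⟨a, ha⟩ := hint
    have hseq : ∀ m : ℕ, ((m:ℝ)+1)⁻¹ • a + (1 - ((m:ℝ)+1)⁻¹) • z ∈ interior C := by
      intro m
      have h1 : (0:ℝ) < ((m:ℝ)+1)⁻¹ := by positivity
      have h2 : ((m:ℝ)+1)⁻¹ ≤ 1 := by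
        rw [inv_le_one_iff₀]; right; linarith [Nat.cast_nonneg (α := ℝ) m]
      exact hconv.combo_interior_closure_mem_interior ha (subset_closure hz)
        h1 (by linarith) (by ring)
    have hc : Filter.Tendsto (fun m : ℕ => ((m:ℝ)+1)⁻¹) Filter.atTop (nhds 0) := by
      simpa [one_div] using (tendsto_one_div_add_atTop_nhds_zero_nat :
        Filter.Tendsto (fun n : ℕ => 1 / ((n:ℝ) + 1)) Filter.atTop (nhds 0))
    have htend0 : Filter.Tendsto
        (fun m : ℕ => ((m:ℝ)+1)⁻¹ • a + (1 - ((m:ℝ)+1)⁻¹) • z)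
        Filter.atTop (nhds z) := by
      have := (hc.smul_const a).add (((tendsto_const_nhds (x := (1:ℝ))).sub hc).smul_const z)
      simpa using this
    have htend := ((f.continuous.tendsto z).comp htend0)
    exact le_of_tendsto htend
      (Filter.Eventually.of_forall fun m => (hf _ (hseq m)).le)
  set n : ℂ := (f 1 : ℂ) + (f Complex.I : ℂ) * Complex.I with hn
  have hfrep : ∀ z : ℂ, f z = (z * (starRingEnd ℂ) n).re := by
    intro z
    have hz : z.re • (1:ℂ) + z.im • Complex.I = z := by
      simp [Complex.real_smul]
    calc f z = f (z.re • (1:ℂ) + z.im • Complex.I) := by rw [hz]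
      _ = z.re * f 1 + z.im * f Complex.I := by
          rw [map_add, map_smul, map_smul]; simp
      _ = (z * (starRingEnd ℂ) n).re := by
          simp [hn, Complex.mul_re, Complex.conj_re, Complex.conj_im]
  have hn0 : n ≠ 0 := by
    intro h
    obtain ⟨a, ha⟩ := hint
    have h1 := hf a ha
    rw [hfrep a, hfrep q, h] at h1
    simp at h1
  set B : ℝ := ‖n‖ with hB
  have hBpos : 0 < B := by
    rw [hB]; exact (norm_pos_iff.mpr hn0)
  have hmem : p + ((r / B : ℝ) : ℂ) * n ∈ C := by
    apply hball
    rw [mem_closedBall, Complex.dist_eq]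
    have : p + ((r / B : ℝ) : ℂ) * n - p = ((r / B : ℝ) : ℂ) * n := by ring
    rw [this, norm_mul, Complex.norm_real, Real.norm_eq_abs, abs_of_pos (by positivity), ← hB]
    rw [div_mul_cancel₀ _ hBpos.ne']
  have hup : r * B ≤ ((q - p) * (starRingEnd ℂ) n).re := by
    have h1 := hfC _ hmem
    rw [hfrep, hfrep q] at h1
    have h2 : ((p + ((r / B : ℝ) : ℂ) * n) * (starRingEnd ℂ) n).re
        = (p * (starRingEnd ℂ) n).re + r * B := by
      rw [add_mul, mul_assoc, Complex.mul_conj, Complex.add_re, ← Complex.ofReal_mul,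
        Complex.ofReal_re]
      congr 1
      rw [Complex.normSq_eq_norm_sq, ← hB]
      field_simp
    rw [h2] at h1
    have h3 : ((q - p) * (starRingEnd ℂ) n).re
        = (q * (starRingEnd ℂ) n).re - (p * (starRingEnd ℂ) n).re := by
      rw [sub_mul, Complex.sub_re]
    linarith
  have hdown : ((q - p) * (starRingEnd ℂ) n).re ≤ r * B := by
    calc ((q - p) * (starRingEnd ℂ) n).re
        ≤ ‖(q - p) * (starRingEnd ℂ) n‖ := Complex.re_le_norm _
      _ = ‖q - p‖ * B := by rw [norm_mul, Complex.norm_conj, hB]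
      _ = r * B := by
          rw [← Complex.dist_eq, dist_comm, ← hr_eq]
  have hre : ((q - p) * (starRingEnd ℂ) n).re = r * B := le_antisymm hdown hup
  have habs : ‖q - p‖ = r := by
    rw [← Complex.dist_eq, dist_comm, ← hr_eq]
  have hqp : q - p = ((r / B : ℝ) : ℂ) * n := by
    have h0 : Complex.normSq ((q - p) - ((r / B : ℝ) : ℂ) * n) = 0 := by
      rw [Complex.normSq_sub]
      have e1 : Complex.normSq (q - p) = r ^ 2 := by
        rw [Complex.normSq_eq_norm_sq, habs]
      have e2 : Complex.normSq (((r / B : ℝ) : ℂ) * n) = r ^ 2 := by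
        rw [Complex.normSq_mul, Complex.normSq_eq_norm_sq, Complex.normSq_eq_norm_sq,
          Complex.norm_real, Real.norm_eq_abs, ← hB, abs_of_pos (by positivity)]
        field_simp
      have e3 : ((q - p) * (starRingEnd ℂ) (((r / B : ℝ) : ℂ) * n)).re
          = r / B * (r * B) := by
        rw [map_mul, Complex.conj_ofReal, mul_comm (((r / B : ℝ) : ℂ)) _, ← mul_assoc,
          Complex.mul_re]
        simp [hre]
        ring
      rw [e1, e2, e3]
      field_simp
      ring
    have := Complex.normSq_eq_zero.mp h0
    linear_combination this
  refine ⟨hrpos, fun y hy => ?_⟩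
  have hkpos : 0 < k := by omega
  have hk' : (0:ℝ) < (k:ℝ) := by exact_mod_cast hkpos
  set d := dist p y with hd
  have hrotC : ∀ z ∈ C, rot p (2 * Real.pi / k) z ∈ C := by
    intro z hz
    have hsym' : rot p (2 * Real.pi / k) '' C = C := hsym
    rw [← hsym']
    exact mem_image_of_mem _ hz
  have hmems : ∀ m : ℕ,
      p + Complex.exp (((2 * Real.pi * m / k : ℝ) : ℂ) * Complex.I) * (y - p) ∈ C := by
    intro m
    induction m with
    | zero =>
      have h0 : ((2 * Real.pi * (0:ℕ) / k : ℝ) : ℂ) = 0 := by push_cast; ring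
      rw [h0]
      simpa using hy
    | succ m ih =>
      have h1 := hrotC _ ih
      have h2 : rot p (2 * Real.pi / k)
          (p + Complex.exp (((2 * Real.pi * m / k : ℝ) : ℂ) * Complex.I) * (y - p))
          = p + Complex.exp (((2 * Real.pi * (m+1:ℕ) / k : ℝ) : ℂ) * Complex.I) * (y - p) := by
        unfold rot
        have h3 : ((2 * Real.pi / k : ℝ) : ℂ) * Complex.I
            + ((2 * Real.pi * m / k : ℝ) : ℂ) * Complex.I
            = ((2 * Real.pi * (m+1:ℕ) / k : ℝ) : ℂ) * Complex.I := by
          push_cast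
          have hkc : ((k:ℝ):ℂ) ≠ 0 := by
            exact_mod_cast (ne_of_gt hk')
          field_simp
          ring
        rw [← h3, Complex.exp_add]
        ring_nf
      rw [h2] at h1
      exact h1
  set w : ℂ := (y - p) * (starRingEnd ℂ) (q - p) with hw
  have hwabs : ‖w‖ = d * r := by
    rw [hw, norm_mul, Complex.norm_conj, habs, ← Complex.dist_eq, dist_comm, ← hd]
  obtain ⟨N, hN⟩ := exists_cos_near k hkpos (Complex.arg w)
  set m : ℕ := (N % (k:ℤ)).toNat with hm
  have hNm : Complex.exp (((2 * Real.pi * m / k : ℝ) : ℂ) * Complex.I)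
      = Complex.exp (((2 * Real.pi * N / k : ℝ) : ℂ) * Complex.I) := by
    have hk0 : (k:ℤ) ≠ 0 := by exact_mod_cast hkpos.ne'
    have hmod : (m : ℤ) = N % (k:ℤ) := Int.toNat_of_nonneg (Int.emod_nonneg N hk0)
    have hdiv : (N:ℝ) = (m:ℝ) + ((N / (k:ℤ) : ℤ) : ℝ) * (k:ℝ) := by
      have h6 := Int.mul_ediv_add_emod N (k:ℤ)
      have h7 : ((k:ℤ) * (N / (k:ℤ)) + N % (k:ℤ) : ℤ) = N := h6
      have h8 : (((k:ℤ) * (N / (k:ℤ)) + N % (k:ℤ) : ℤ) : ℝ) = (N:ℝ) := by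
        exact_mod_cast congrArg Int.cast h7
      push_cast [← hmod] at h8
      linarith
    have h9 : ((2 * Real.pi * N / k : ℝ) : ℂ) * Complex.I
        = ((2 * Real.pi * m / k : ℝ) : ℂ) * Complex.I
          + ((N / (k:ℤ) : ℤ) : ℂ) * (2 * (Real.pi:ℂ) * Complex.I) := by
      rw [hdiv]
      have hkc : ((k:ℕ):ℂ) ≠ 0 := by exact_mod_cast hkpos.ne'
      push_cast
      field_simp
    rw [h9, Complex.exp_add, Complex.exp_int_mul_two_pi_mul_I, mul_one]
  set E : ℂ := Complex.exp (((2 * Real.pi * m / k : ℝ) : ℂ) * Complex.I) with hE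
  have hfy := hfC _ (hmems m)
  rw [hfrep, hfrep q] at hfy
  have hexpand : ((p + E * (y - p)) * (starRingEnd ℂ) n).re
      = (p * (starRingEnd ℂ) n).re + (E * (y - p) * (starRingEnd ℂ) n).re := by
    rw [add_mul, Complex.add_re]
  have h4 : (E * (y - p) * (starRingEnd ℂ) n).re ≤ r * B := by
    have h3 : ((q - p) * (starRingEnd ℂ) n).re
        = (q * (starRingEnd ℂ) n).re - (p * (starRingEnd ℂ) n).re := by
      rw [sub_mul, Complex.sub_re]
    rw [hexpand] at hfy
    linarith [hre]
  have hn_eq : (starRingEnd ℂ) n = ((B / r : ℝ) : ℂ) * (starRingEnd ℂ) (q - p) := by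
    have h5 : n = ((B / r : ℝ) : ℂ) * (q - p) := by
      rw [hqp, ← mul_assoc, ← Complex.ofReal_mul]
      rw [div_mul_div_comm]
      rw [mul_comm B r, div_self (by positivity : r * B ≠ 0)]
      simp
    rw [h5, map_mul, Complex.conj_ofReal]
  have h6 : (E * (y - p) * (starRingEnd ℂ) n).re = (B / r) * (E * w).re := by
    have h7 : E * (y - p) * (starRingEnd ℂ) n = ((B / r : ℝ) : ℂ) * (E * w) := by
      rw [hn_eq, hw]; ring
    rw [h7, Complex.re_ofReal_mul]
  have h8 : (E * w).re ≤ r ^ 2 := by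
    have h9 : (B / r) * (E * w).re ≤ r * B := by rw [← h6]; exact h4
    have h11 : (E * w).re = (r / B) * ((B / r) * (E * w).re) := by
      field_simp
    rw [h11]
    calc (r / B) * ((B / r) * (E * w).re) ≤ (r / B) * (r * B) :=
          mul_le_mul_of_nonneg_left h9 (by positivity)
      _ = r ^ 2 := by field_simp
  have hew : (E * w).re = (d * r) * Real.cos (2 * Real.pi * N / k + Complex.arg w) := by
    rw [hNm]
    have h11 : Complex.exp (((2 * Real.pi * N / k : ℝ) : ℂ) * Complex.I) * w
        = ((‖w‖ : ℝ) : ℂ)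
          * Complex.exp (((2 * Real.pi * N / k + Complex.arg w : ℝ) : ℂ) * Complex.I) := by
      conv_lhs => rw [← Complex.norm_mul_exp_arg_mul_I w]
      conv_rhs => rw [Complex.ofReal_add, add_mul, Complex.exp_add]
      ring
    rw [h11, Complex.re_ofReal_mul, Complex.exp_ofReal_mul_I_re, hwabs]
  have hfinal : d * r * Real.cos (Real.pi / k) ≤ r ^ 2 := by
    have h12 : 0 ≤ d * r := mul_nonneg dist_nonneg hrpos.le
    calc d * r * Real.cos (Real.pi / k)
        ≤ d * r * Real.cos (2 * Real.pi * N / k + Complex.arg w) :=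
          mul_le_mul_of_nonneg_left hN h12
      _ = (E * w).re := hew.symm
      _ ≤ r ^ 2 := h8
  nlinarith [hfinal, hrpos]


lemma sin_pi5_pos : 0 < Real.sin (Real.pi/5) :=
  Real.sin_pos_of_pos_of_lt_pi (by positivity) (by linarith [Real.pi_pos])

lemma two_sin_eq : 2 * Real.sin (Real.pi / 5) = Real.sqrt ((5 - Real.sqrt 5) / 2) := by
  have h5 : Real.sqrt 5 ^ 2 = 5 := Real.sq_sqrt (by norm_num)
  have h5le : Real.sqrt 5 ≤ 5 := by nlinarith [Real.sqrt_nonneg 5]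
  have hsq : (2 * Real.sin (Real.pi/5)) ^ 2 = (5 - Real.sqrt 5) / 2 := by
    have hs := Real.sin_sq_add_cos_sq (Real.pi/5)
    rw [Real.cos_pi_div_five] at hs
    nlinarith [hs]
  rw [← hsq]
  exact (Real.sqrt_sq (by linarith [sin_pi5_pos] : (0:ℝ) ≤ 2 * Real.sin (Real.pi/5))).symm

lemma inv_cos6_lt : 1 / Real.cos (Real.pi/6) < 2 * Real.sin (Real.pi/5) := by
  rw [Real.cos_pi_div_six]
  have h3 : Real.sqrt 3 ^ 2 = 3 := Real.sq_sqrt (by norm_num)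
  have h3p : 0 < Real.sqrt 3 := Real.sqrt_pos.mpr (by norm_num)
  have h5 : Real.sqrt 5 ^ 2 = 5 := Real.sq_sqrt (by norm_num)
  have h5p : 0 < Real.sqrt 5 := Real.sqrt_pos.mpr (by norm_num)
  have hsin : Real.sin (Real.pi/5) ^ 2 = (10 - 2 * Real.sqrt 5)/16 := by
    have hs := Real.sin_sq_add_cos_sq (Real.pi/5)
    rw [Real.cos_pi_div_five] at hs
    nlinarith [hs]
  have hspos := sin_pi5_pos
  rw [div_lt_iff₀ (by positivity)]
  nlinarith [hsin, h3, h5, hspos, h3p, h5p, sq_nonneg (2*Real.sin (Real.pi/5)*(Real.sqrt 3/2) - 1), mul_pos hspos h3p, sq_nonneg (Real.sqrt 5 - 7/3)]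



/-- For a `k`-rotationally symmetric planar convex body with `k ≥ 6`,
the circumradius and inradius (with respect to the center `p`)
satisfy `R < 2 sin(π/5) · r = √((5 − √5)/2) · r`. -/
theorem stmt_10 (C : Set ℂ) (p : ℂ) (k : ℕ) (hC : IsConvexBody C)
    (hk : 6 ≤ k) (hsym : IsRotSym C p k) (hp : p ∈ interior C) :
    circumrad C p < 2 * Real.sin (Real.pi / 5) * infDist p (frontier C) ∧
      2 * Real.sin (Real.pi / 5) = Real.sqrt ((5 - Real.sqrt 5) / 2) := by
  refine ⟨?_, two_sin_eq⟩
  obtain ⟨hrpos, hkey⟩ := key_s10 C p k hC hk hsym hp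
  set r := infDist p (frontier C) with hr
  have hcos6 : Real.cos (Real.pi / 6) ≤ Real.cos (Real.pi / k) := by
    apply Real.cos_le_cos_of_nonneg_of_le_pi
    · positivity
    · linarith [Real.pi_pos]
    · apply div_le_div_of_nonneg_left Real.pi_pos.le (by norm_num)
      exact_mod_cast hk
  have hcos6pos : 0 < Real.cos (Real.pi / 6) := by
    rw [Real.cos_pi_div_six]; positivity
  have hbound : ∀ y ∈ C, dist p y ≤ r / Real.cos (Real.pi / 6) := by
    intro y hy
    have h1 := hkey y hy
    have h2 : dist p y * Real.cos (Real.pi / 6) ≤ r :=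
      le_trans (mul_le_mul_of_nonneg_left hcos6 dist_nonneg) h1
    rwa [← le_div_iff₀ hcos6pos] at h2
  have hcirc : circumrad C p ≤ r / Real.cos (Real.pi / 6) := by
    apply Real.iSup_le _ (by positivity)
    intro y
    by_cases hy : y ∈ C
    · rw [ciSup_pos hy]
      exact hbound y hy
    · haveI : IsEmpty (y ∈ C) := ⟨hy⟩
      rw [Real.iSup_of_isEmpty]
      positivity
  calc circumrad C p ≤ r / Real.cos (Real.pi / 6) := hcirc
    _ = (1 / Real.cos (Real.pi / 6)) * r := by ring
    _ < 2 * Real.sin (Real.pi / 5) * r := mul_lt_mul_of_pos_right inv_cos6_lt hrpos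
end
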